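/- arXiv:1803.02694 — 3 statements merged into one kernel-verified Lean document; each statement's English description precedes it below -/
import Mathlib

section
/- Let φ be a Schwartz function on ℝ, s ∈ ℝ and 0 < δ < 1. Then for every σ ≥ 0 there exists a constant C = C(φ, σ, s, δ) > 0 such that for all integers n ≥ 1 and all α ∈ ℝ, ‖n^{−δ/2−s} φ(x/n^δ) cos(nx − α)‖_{H^σ} ≤ C n^{σ−s}. -/
open MeasureTheory Filter

/-- The Fourier transform `f̂(ξ) = (2π)^{-1/2} ∫ e^{-iξx} f(x) dx` (unitary convention). -/
noncomputable def fourierHat (f : ℝ → ℂ) (ξ : ℝ) : ℂ :=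
  (Real.sqrt (2 * Real.pi) : ℂ)⁻¹ * ∫ x : ℝ, Complex.exp (-(Complex.I * (ξ : ℂ) * (x : ℂ))) * f x

/-- The `H^s(ℝ)` norm `(∫ (1+ξ²)^s |f̂(ξ)|² dξ)^{1/2}` of a real-valued function. -/
noncomputable def hsNorm (s : ℝ) (f : ℝ → ℝ) : ℝ :=
  (∫ ξ : ℝ, (1 + ξ ^ 2) ^ s * ‖fourierHat (fun x => (f x : ℂ)) ξ‖ ^ 2) ^ (1/2 : ℝ)

/-- Membership in the Sobolev space `H^s(ℝ)`. -/
def memHs (s : ℝ) (f : ℝ → ℝ) : Prop :=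
  MeasureTheory.Integrable
    (fun ξ : ℝ => (1 + ξ ^ 2) ^ s * ‖fourierHat (fun x => (f x : ℂ)) ξ‖ ^ 2)


noncomputable def schwartzToComplex (φ : SchwartzMap ℝ ℝ) : SchwartzMap ℝ ℂ where
  toFun x := (φ x : ℂ)
  smooth' := Complex.ofRealCLM.contDiff.comp (φ.smooth ⊤)
  decay' := by
    intro k n
    obtain ⟨C, hC⟩ := φ.decay' k n
    refine ⟨C, fun x => ?_⟩
    have h : ‖iteratedFDeriv ℝ n (⇑Complex.ofRealLI ∘ ⇑φ) x‖ = ‖iteratedFDeriv ℝ n (⇑φ) x‖ :=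
      Complex.ofRealLI.norm_iteratedFDeriv_comp_left (φ.smooth ⊤).contDiffAt (by exact_mod_cast le_top)
    have he : (fun x => (φ x : ℂ)) = ⇑Complex.ofRealLI ∘ ⇑φ := rfl
    rw [he, h]
    exact hC x

lemma aux_pow (t : ℝ) (ht : 0 ≤ t) (k : ℕ) : (1 + t) ^ k ≤ 2 ^ k * (1 + t ^ k) := by
  induction k with
  | zero => norm_num
  | succ k ih =>
    have h1 : t + t ^ k ≤ 1 + t ^ (k + 1) := by
      rcases le_or_gt t 1 with h | h
      · have h2 := mul_nonneg (sub_nonneg.2 h) (sub_nonneg.2 (pow_le_one₀ ht h (n := k)))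
        nlinarith [pow_succ t k]
      · have h2 := mul_nonneg (sub_nonneg.2 h.le) (sub_nonneg.2 (one_le_pow₀ h.le (n := k)))
        nlinarith [pow_succ t k]
    have h2 : (1 + t ^ k) * (1 + t) ≤ 2 * (1 + t ^ (k + 1)) := by
      nlinarith [pow_succ t k]
    calc (1 + t) ^ (k + 1) = (1 + t) ^ k * (1 + t) := by ring
      _ ≤ (2 ^ k * (1 + t ^ k)) * (1 + t) := by
          apply mul_le_mul_of_nonneg_right ih (by linarith)
      _ = 2 ^ k * ((1 + t ^ k) * (1 + t)) := by ring
      _ ≤ 2 ^ k * (2 * (1 + t ^ (k + 1))) :=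
          mul_le_mul_of_nonneg_left h2 (pow_nonneg (by norm_num) k)
      _ = 2 ^ (k + 1) * (1 + t ^ (k + 1)) := by ring

lemma schwartzToComplex_apply (φ : SchwartzMap ℝ ℝ) (x : ℝ) :
    schwartzToComplex φ x = (φ x : ℂ) := rfl

lemma g_integrable (ψ : SchwartzMap ℝ ℂ) (σ : ℝ) (hσ : 0 ≤ σ) :
    Integrable (fun u : ℝ => (1 + u ^ 2) ^ σ * ‖ψ (u / (2 * Real.pi))‖ ^ 2) := by
  set k : ℕ := ⌈σ⌉₊ with hk
  obtain ⟨C0, hC0pos, hC0⟩ := ψ.decay 0 0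
  obtain ⟨C1, hC1pos, hC1⟩ := ψ.decay (k + 1) 0
  have hC0' : ∀ y : ℝ, ‖ψ y‖ ≤ C0 := by
    intro y; have := hC0 y; simpa [norm_iteratedFDeriv_zero] using this
  have hC1' : ∀ y : ℝ, |y| ^ (k + 1) * ‖ψ y‖ ≤ C1 := by
    intro y; have := hC1 y; simpa [norm_iteratedFDeriv_zero, Real.norm_eq_abs] using this
  set M : ℝ := (2 * Real.pi) ^ (2 * (k + 1)) * (2 ^ (k + 1) * (C0 ^ 2 + C1 ^ 2)) with hM
  have hpi : 1 ≤ 2 * Real.pi := by nlinarith [Real.pi_gt_three]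
  have key : ∀ u : ℝ, (1 + u ^ 2) ^ σ * ‖ψ (u / (2 * Real.pi))‖ ^ 2 ≤ M * (1 + u ^ 2)⁻¹ := by
    intro u
    set y : ℝ := u / (2 * Real.pi) with hy
    have hu : u = 2 * Real.pi * y := by
      rw [hy]; field_simp
    have h1u : (1 : ℝ) ≤ 1 + u ^ 2 := by nlinarith [sq_nonneg u]
    -- step (2): (1+u²)^(k+1) * ‖ψ y‖² ≤ M
    have step2 : ((1 + u ^ 2) : ℝ) ^ (k + 1) * ‖ψ y‖ ^ 2 ≤ M := by
      have hA : (1 + u ^ 2 : ℝ) ≤ (2 * Real.pi) ^ 2 * (1 + y ^ 2) := by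
        rw [hu]; nlinarith [sq_nonneg y]
      have hA' : ((1 + u ^ 2) : ℝ) ^ (k + 1) ≤ ((2 * Real.pi) ^ 2) ^ (k + 1) * (1 + y ^ 2) ^ (k + 1) := by
        calc ((1 + u ^ 2) : ℝ) ^ (k + 1) ≤ ((2 * Real.pi) ^ 2 * (1 + y ^ 2)) ^ (k + 1) :=
              pow_le_pow_left₀ (by positivity) hA _
          _ = ((2 * Real.pi) ^ 2) ^ (k + 1) * (1 + y ^ 2) ^ (k + 1) := by rw [mul_pow]
      have hB : (1 + y ^ 2 : ℝ) ^ (k + 1) * ‖ψ y‖ ^ 2 ≤ 2 ^ (k + 1) * (C0 ^ 2 + C1 ^ 2) := by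
        have h3 := aux_pow (y ^ 2) (sq_nonneg y) (k + 1)
        have h4 : (1 + (y ^ 2) ^ (k + 1)) * ‖ψ y‖ ^ 2 ≤ C0 ^ 2 + C1 ^ 2 := by
          have e1 : ‖ψ y‖ ^ 2 ≤ C0 ^ 2 := by
            have := hC0' y; nlinarith [norm_nonneg (ψ y)]
          have e2 : (y ^ 2) ^ (k + 1) * ‖ψ y‖ ^ 2 ≤ C1 ^ 2 := by
            have h5 := hC1' y
            have h6 : (|y| ^ (k + 1) * ‖ψ y‖) ^ 2 ≤ C1 ^ 2 := by
              nlinarith [mul_nonneg (pow_nonneg (abs_nonneg y) (k + 1)) (norm_nonneg (ψ y))]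
            calc (y ^ 2) ^ (k + 1) * ‖ψ y‖ ^ 2 = (|y| ^ (k + 1) * ‖ψ y‖) ^ 2 := by
                  rw [mul_pow, ← abs_pow, sq_abs, ← pow_mul, ← pow_mul, Nat.mul_comm (k+1) 2]
              _ ≤ C1 ^ 2 := h6
          nlinarith [norm_nonneg (ψ y), sq_nonneg (‖ψ y‖)]
        calc (1 + y ^ 2 : ℝ) ^ (k + 1) * ‖ψ y‖ ^ 2
            ≤ (2 ^ (k + 1) * (1 + (y ^ 2) ^ (k + 1))) * ‖ψ y‖ ^ 2 :=
              mul_le_mul_of_nonneg_right h3 (by positivity)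
          _ = 2 ^ (k + 1) * ((1 + (y ^ 2) ^ (k + 1)) * ‖ψ y‖ ^ 2) := by ring
          _ ≤ 2 ^ (k + 1) * (C0 ^ 2 + C1 ^ 2) :=
              mul_le_mul_of_nonneg_left h4 (by positivity)
      calc ((1 + u ^ 2) : ℝ) ^ (k + 1) * ‖ψ y‖ ^ 2
          ≤ (((2 * Real.pi) ^ 2) ^ (k + 1) * (1 + y ^ 2) ^ (k + 1)) * ‖ψ y‖ ^ 2 :=
            mul_le_mul_of_nonneg_right hA' (by positivity)
        _ = ((2 * Real.pi) ^ 2) ^ (k + 1) * ((1 + y ^ 2) ^ (k + 1) * ‖ψ y‖ ^ 2) := by ring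
        _ ≤ ((2 * Real.pi) ^ 2) ^ (k + 1) * (2 ^ (k + 1) * (C0 ^ 2 + C1 ^ 2)) :=
            mul_le_mul_of_nonneg_left hB (by positivity)
        _ = M := by rw [hM, ← pow_mul]
    -- step (1): rpow ≤ k-pow
    have step1 : ((1 + u ^ 2) : ℝ) ^ σ ≤ ((1 + u ^ 2) : ℝ) ^ (k : ℕ) := by
      calc ((1 + u ^ 2) : ℝ) ^ σ ≤ ((1 + u ^ 2) : ℝ) ^ (k : ℝ) :=
            Real.rpow_le_rpow_of_exponent_le h1u (Nat.le_ceil σ)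
        _ = ((1 + u ^ 2) : ℝ) ^ (k : ℕ) := Real.rpow_natCast _ k
    have h0u : (0:ℝ) < 1 + u ^ 2 := by linarith
    calc (1 + u ^ 2) ^ σ * ‖ψ y‖ ^ 2 ≤ ((1 + u ^ 2) : ℝ) ^ (k : ℕ) * ‖ψ y‖ ^ 2 :=
          mul_le_mul_of_nonneg_right step1 (by positivity)
      _ = (((1 + u ^ 2) : ℝ) ^ (k + 1) * ‖ψ y‖ ^ 2) * (1 + u ^ 2)⁻¹ := by
          field_simp; ring
      _ ≤ M * (1 + u ^ 2)⁻¹ :=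
          mul_le_mul_of_nonneg_right step2 (by positivity)
  have hcont : Continuous (fun u : ℝ => (1 + u ^ 2) ^ σ * ‖ψ (u / (2 * Real.pi))‖ ^ 2) := by
    apply Continuous.mul
    · apply Continuous.rpow_const (by continuity)
      intro x; right; exact hσ
    · exact ((ψ.continuous.comp (by continuity)).norm).pow 2
  refine (integrable_inv_one_add_sq.const_mul M).mono' hcont.aestronglyMeasurable ?_
  filter_upwards with u
  rw [Real.norm_eq_abs, abs_of_nonneg (by positivity)]
  exact key u

lemma fourierHat_formula (φc : SchwartzMap ℝ ℂ) {N : ℝ} (hN : 0 < N) (c n α ξ : ℝ) :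
    fourierHat (fun x => (c : ℂ) * φc (x / N) * Complex.cos (((n * x - α : ℝ) : ℂ))) ξ =
      (Real.sqrt (2 * Real.pi) : ℂ)⁻¹ * (((c * N / 2 : ℝ)) : ℂ) *
        (Complex.exp (((-α : ℝ) : ℂ) * Complex.I) *
            (SchwartzMap.fourierTransformCLM ℂ φc) (N * (ξ - n) / (2 * Real.pi)) +
         Complex.exp (((α : ℝ) : ℂ) * Complex.I) *
            (SchwartzMap.fourierTransformCLM ℂ φc) (N * (ξ + n) / (2 * Real.pi))) := by
  have hπ : (0:ℝ) < Real.pi := Real.pi_pos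
  have hint : Integrable (fun x : ℝ => φc (x / N)) := by
    simpa [div_eq_inv_mul] using
      (φc.integrable (μ := volume)).comp_mul_left' (inv_ne_zero hN.ne')
  -- the basic modulated integral
  have key : ∀ η : ℝ, (∫ x : ℝ, Complex.exp (-(Complex.I * (η:ℂ) * (x:ℂ))) * φc (x / N))
      = (N : ℂ) * (SchwartzMap.fourierTransformCLM ℂ φc) (N * η / (2 * Real.pi)) := by
    intro η
    have h1 : (fun x : ℝ => Complex.exp (-(Complex.I * (η:ℂ) * (x:ℂ))) * φc (x / N))
        = fun x : ℝ => (fun y : ℝ =>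
            Complex.exp (((-2 * Real.pi * y * (N * η / (2 * Real.pi)) : ℝ) : ℂ) * Complex.I)
              • φc y) (x / N) := by
      funext x
      simp only [smul_eq_mul]
      congr 1
      have harg : (-2 * Real.pi * (x / N) * (N * η / (2 * Real.pi)) : ℝ) = -(η * x) := by
        field_simp
      rw [harg]
      push_cast
      ring_nf
    rw [h1, MeasureTheory.Measure.integral_comp_div
      (fun y : ℝ => Complex.exp (((-2 * Real.pi * y * (N * η / (2 * Real.pi)) : ℝ) : ℂ) * Complex.I)
        • φc y) N, abs_of_pos hN]
    rw [← Real.fourier_real_eq_integral_exp_smul]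
    simp [SchwartzMap.fourierTransformCLM_apply, SchwartzMap.fourier_coe, smul_eq_mul]
  -- integrability of each modulated piece
  have hgInt : ∀ η : ℝ, Integrable (fun x : ℝ => Complex.exp (-(Complex.I * (η:ℂ) * (x:ℂ))) * φc (x / N)) := by
    intro η
    refine hint.norm.mono' ?_ ?_
    · apply Continuous.aestronglyMeasurable
      exact (Complex.continuous_exp.comp (by continuity)).mul (φc.continuous.comp (by continuity))
    · filter_upwards with x
      have he : -(Complex.I * (η:ℂ) * (x:ℂ)) = ((-(η * x) : ℝ) : ℂ) * Complex.I := by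
        push_cast; ring
      rw [norm_mul, he, Complex.norm_exp_ofReal_mul_I, one_mul]
  -- split the integrand
  have hsplit : (fun x : ℝ => Complex.exp (-(Complex.I * (ξ:ℂ) * (x:ℂ))) *
        ((c : ℂ) * φc (x / N) * Complex.cos (((n * x - α : ℝ) : ℂ))))
      = fun x : ℝ =>
          ((c / 2 : ℝ) : ℂ) * Complex.exp (((-α : ℝ) : ℂ) * Complex.I) *
            (Complex.exp (-(Complex.I * ((ξ - n : ℝ):ℂ) * (x:ℂ))) * φc (x / N))
        + ((c / 2 : ℝ) : ℂ) * Complex.exp (((α : ℝ) : ℂ) * Complex.I) *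
            (Complex.exp (-(Complex.I * ((ξ + n : ℝ):ℂ) * (x:ℂ))) * φc (x / N)) := by
    funext x
    simp only [Complex.cos]
    push_cast
    rw [show -(Complex.I * (ξ:ℂ) * (x:ℂ)) = -(Complex.I * ξ * x) from rfl]
    have e1 : Complex.exp (-(Complex.I * (ξ:ℂ) * (x:ℂ))) *
        Complex.exp (((n:ℂ) * x - α) * Complex.I) =
        Complex.exp ((-α : ℂ) * Complex.I) *
          Complex.exp (-(Complex.I * (((ξ:ℂ) - n)) * (x:ℂ))) := by
      rw [← Complex.exp_add, ← Complex.exp_add]; congr 1; ring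
    have e2 : Complex.exp (-(Complex.I * (ξ:ℂ) * (x:ℂ))) *
        Complex.exp (-((n:ℂ) * x - α) * Complex.I) =
        Complex.exp ((α : ℂ) * Complex.I) *
          Complex.exp (-(Complex.I * (((ξ:ℂ) + n)) * (x:ℂ))) := by
      rw [← Complex.exp_add, ← Complex.exp_add]; congr 1; ring
    calc Complex.exp (-(Complex.I * (ξ:ℂ) * (x:ℂ))) *
          ((c:ℂ) * φc (x / N) *
            ((Complex.exp (((n:ℂ) * x - α) * Complex.I) +
              Complex.exp (-((n:ℂ) * x - α) * Complex.I)) / 2))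
        = ((c:ℂ)/2) * (Complex.exp (-(Complex.I * (ξ:ℂ) * (x:ℂ))) *
              Complex.exp (((n:ℂ) * x - α) * Complex.I)) * φc (x / N)
          + ((c:ℂ)/2) * (Complex.exp (-(Complex.I * (ξ:ℂ) * (x:ℂ))) *
              Complex.exp (-((n:ℂ) * x - α) * Complex.I)) * φc (x / N) := by ring
      _ = _ := by rw [e1, e2]; ring_nf
  unfold fourierHat
  rw [hsplit]
  rw [integral_add (((hgInt (ξ - n)).const_mul _)) (((hgInt (ξ + n)).const_mul _)),
    integral_const_mul, integral_const_mul, key (ξ - n), key (ξ + n)]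
  push_cast
  ring_nf

lemma weight_aux {nR N ξ v : ℝ} (hn1 : 1 ≤ nR) (hN1 : 1 ≤ N) (hv : v ^ 2 = nR ^ 2) :
    1 + ξ ^ 2 ≤ 3 * nR ^ 2 * (1 + (N * (ξ - v)) ^ 2) := by
  have hN2 : (1:ℝ) ≤ N ^ 2 := by nlinarith [sq_nonneg (N - 1)]
  have hn2 : (1:ℝ) ≤ nR ^ 2 := by nlinarith [sq_nonneg (nR - 1)]
  have hnN : (1:ℝ) ≤ nR ^ 2 * N ^ 2 := one_le_mul_of_one_le_of_one_le hn2 hN2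
  have f1 : (0:ℝ) ≤ (nR ^ 2 * N ^ 2 - 1) * (ξ - v) ^ 2 :=
    mul_nonneg (by linarith) (sq_nonneg _)
  nlinarith [sq_nonneg (ξ - 2 * v), sq_nonneg (ξ - v), sq_nonneg (N * (ξ - v))]

lemma add_sq_le_two_mul (a b : ℝ) : (a + b) ^ 2 ≤ 2 * (a ^ 2 + b ^ 2) := by
  nlinarith [sq_nonneg (a - b)]

set_option maxHeartbeats 1000000 in
/-- for a Schwartz function `φ`, `s ∈ ℝ` and `0 < δ < 1`, for every `σ ≥ 0`
there is `C = C(φ, σ, s, δ) > 0` such that for all integers `n ≥ 1` and all `α ∈ ℝ`,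
`‖n^{-δ/2-s} φ(x/n^δ) cos(nx - α)‖_{H^σ} ≤ C n^{σ-s}`. -/
theorem hs_norm_bound_cos (φ : SchwartzMap ℝ ℝ) (s δ : ℝ) (hδ0 : 0 < δ) (hδ1 : δ < 1) :
    ∀ σ : ℝ, 0 ≤ σ → ∃ C : ℝ, 0 < C ∧
      ∀ n : ℕ, 1 ≤ n → ∀ α : ℝ,
        hsNorm σ (fun x =>
            (n : ℝ) ^ (-(δ/2) - s) * φ (x / (n : ℝ) ^ δ) * Real.cos ((n : ℝ) * x - α)) ≤
          C * (n : ℝ) ^ (σ - s) := by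
  intro σ hσ
  have hπ : (0:ℝ) < Real.pi := Real.pi_pos
  set φc := schwartzToComplex φ with hφc
  set ψ := SchwartzMap.fourierTransformCLM ℂ φc with hψ
  set g : ℝ → ℝ := fun u => (1 + u ^ 2) ^ σ * ‖ψ (u / (2 * Real.pi))‖ ^ 2 with hgdef
  have hg : Integrable g := g_integrable ψ σ hσ
  have hg0 : ∀ u, 0 ≤ g u := fun u => by
    rw [hgdef]
    have : (0:ℝ) ≤ (1 + u ^ 2) ^ σ := Real.rpow_nonneg (by positivity) σ
    positivity
  set K : ℝ := ∫ u, g u with hK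
  have hK0 : 0 ≤ K := integral_nonneg hg0
  set D : ℝ := (3:ℝ) ^ σ * K / (2 * Real.pi) with hD
  have hD0 : 0 ≤ D := by
    rw [hD]
    have : (0:ℝ) ≤ (3:ℝ) ^ σ := Real.rpow_nonneg (by norm_num) σ
    positivity
  clear_value φc ψ g K D
  refine ⟨Real.sqrt D + 1, by positivity, ?_⟩
  intro n hn α
  have hn1 : (1:ℝ) ≤ (n:ℝ) := by exact_mod_cast hn
  have hn0 : (0:ℝ) < n := by linarith
  set N : ℝ := (n:ℝ) ^ δ with hNdef
  have hN1 : (1:ℝ) ≤ N := Real.one_le_rpow hn1 hδ0.le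
  have hN0 : (0:ℝ) < N := by linarith
  set c : ℝ := (n:ℝ) ^ (-(δ/2) - s) with hc
  have hc0 : (0:ℝ) < c := Real.rpow_pos_of_pos hn0 _
  set P : ℝ := (n:ℝ) ^ (σ - s) with hP
  have hP0 : (0:ℝ) < P := Real.rpow_pos_of_pos hn0 _
  set W : ℝ := (3 * (n:ℝ) ^ 2) ^ σ with hW
  have hW0 : (0:ℝ) ≤ W := Real.rpow_nonneg (by positivity) σ
  set t : ℝ := (Real.sqrt (2 * Real.pi))⁻¹ * (c * N / 2) with ht
  have ht0 : (0:ℝ) ≤ t := by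
    rw [ht]
    positivity
  set B : ℝ := 2 * t ^ 2 * W with hB
  have hB0 : (0:ℝ) ≤ B := by rw [hB]; positivity
  clear_value N c P W t B
  -- identify the complexified function
  have hfun : (fun x : ℝ => ((c * φ (x / N) * Real.cos ((n:ℝ) * x - α) : ℝ) : ℂ))
      = fun x : ℝ => (c : ℂ) * φc (x / N) * Complex.cos ((((n:ℝ) * x - α : ℝ)) : ℂ) := by
    funext x
    rw [hφc, schwartzToComplex_apply, ← Complex.ofReal_cos]
    push_cast
    ring
  -- pointwise bound
  have hpt : ∀ ξ : ℝ,
      (1 + ξ ^ 2) ^ σ *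
        ‖fourierHat (fun x => (c : ℂ) * φc (x / N) *
            Complex.cos ((((n:ℝ) * x - α : ℝ)) : ℂ)) ξ‖ ^ 2
      ≤ B * (g (N * (ξ - n)) + g (N * (ξ + n))) := by
    intro ξ
    rw [fourierHat_formula φc hN0 c (n:ℝ) α ξ, ← hψ]
    set a : ℝ := ‖ψ (N * (ξ - n) / (2 * Real.pi))‖ with ha
    set b : ℝ := ‖ψ (N * (ξ + n) / (2 * Real.pi))‖ with hb
    have ha0 : 0 ≤ a := norm_nonneg _
    have hb0 : 0 ≤ b := norm_nonneg _
    have hcN : (0:ℝ) ≤ c * N / 2 := div_nonneg (mul_nonneg hc0.le hN0.le) (by norm_num)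
    have hnorm : ‖(Real.sqrt (2 * Real.pi) : ℂ)⁻¹ * (((c * N / 2 : ℝ)) : ℂ) *
        (Complex.exp (((-α : ℝ) : ℂ) * Complex.I) * ψ (N * (ξ - n) / (2 * Real.pi)) +
         Complex.exp (((α : ℝ) : ℂ) * Complex.I) * ψ (N * (ξ + n) / (2 * Real.pi)))‖
        ≤ t * (a + b) := by
      rw [norm_mul, norm_mul]
      have h1 : ‖(Real.sqrt (2 * Real.pi) : ℂ)⁻¹‖ = (Real.sqrt (2 * Real.pi))⁻¹ := by
        rw [norm_inv, Complex.norm_real, Real.norm_eq_abs,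
          abs_of_nonneg (Real.sqrt_nonneg _)]
      have h2 : ‖(((c * N / 2 : ℝ)) : ℂ)‖ = c * N / 2 := by
        rw [Complex.norm_real, Real.norm_eq_abs, abs_of_nonneg hcN]
      have h3 : ‖Complex.exp (((-α : ℝ) : ℂ) * Complex.I) * ψ (N * (ξ - n) / (2 * Real.pi)) +
          Complex.exp (((α : ℝ) : ℂ) * Complex.I) * ψ (N * (ξ + n) / (2 * Real.pi))‖ ≤ a + b := by
        refine (norm_add_le _ _).trans ?_
        rw [norm_mul, norm_mul, Complex.norm_exp_ofReal_mul_I, Complex.norm_exp_ofReal_mul_I,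
          one_mul, one_mul, ha, hb]
      rw [h1, h2, ht]
      exact mul_le_mul_of_nonneg_left h3
        (mul_nonneg (inv_nonneg.2 (Real.sqrt_nonneg _)) hcN)
    -- weight comparison
    have hweight : ∀ v : ℝ, v ^ 2 = (n:ℝ) ^ 2 →
        (1 + ξ ^ 2 : ℝ) ^ σ ≤ W * (1 + (N * (ξ - v)) ^ 2) ^ σ := by
      intro v hv
      have hbase : (1 + ξ ^ 2 : ℝ) ≤ 3 * (n:ℝ) ^ 2 * (1 + (N * (ξ - v)) ^ 2) :=
        weight_aux hn1 hN1 hv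
      calc (1 + ξ ^ 2 : ℝ) ^ σ ≤ (3 * (n:ℝ) ^ 2 * (1 + (N * (ξ - v)) ^ 2)) ^ σ :=
            Real.rpow_le_rpow (by positivity) hbase hσ
        _ = W * (1 + (N * (ξ - v)) ^ 2) ^ σ := by
            rw [hW, ← Real.mul_rpow (by positivity) (by positivity)]
    have hw₁ := hweight (n:ℝ) rfl
    have hw₂ := hweight (-(n:ℝ)) (by ring)
    have hg₁ : g (N * (ξ - n)) = (1 + (N * (ξ - n)) ^ 2) ^ σ * a ^ 2 := by rw [hgdef, ha]
    have hg₂ : g (N * (ξ + n)) = (1 + (N * (ξ + n)) ^ 2) ^ σ * b ^ 2 := by rw [hgdef, hb]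
    have habs : ∀ F : ℂ, ‖F‖ ≤ t * (a + b) →
        (1 + ξ ^ 2) ^ σ * ‖F‖ ^ 2 ≤ B * (g (N * (ξ - n)) + g (N * (ξ + n))) := by
      intro F hF
      have hwσ0 : (0:ℝ) ≤ (1 + ξ ^ 2) ^ σ := Real.rpow_nonneg (by positivity) σ
      have hsq : ‖F‖ ^ 2 ≤ t ^ 2 * (a + b) ^ 2 := by
        have h := pow_le_pow_left₀ (norm_nonneg _) hF 2
        calc ‖F‖ ^ 2 ≤ (t * (a + b)) ^ 2 := h
          _ = t ^ 2 * (a + b) ^ 2 := by ring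
      calc (1 + ξ ^ 2) ^ σ * ‖F‖ ^ 2
          ≤ (1 + ξ ^ 2) ^ σ * (t ^ 2 * (a + b) ^ 2) := mul_le_mul_of_nonneg_left hsq hwσ0
        _ ≤ (1 + ξ ^ 2) ^ σ * (t ^ 2 * (2 * (a ^ 2 + b ^ 2))) := by
            apply mul_le_mul_of_nonneg_left _ hwσ0
            exact mul_le_mul_of_nonneg_left (add_sq_le_two_mul a b) (sq_nonneg t)
        _ = 2 * t ^ 2 * ((1 + ξ ^ 2) ^ σ * a ^ 2 + (1 + ξ ^ 2) ^ σ * b ^ 2) := by ring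
        _ ≤ 2 * t ^ 2 * (W * (1 + (N * (ξ - n)) ^ 2) ^ σ * a ^ 2
              + W * (1 + (N * (ξ + n)) ^ 2) ^ σ * b ^ 2) := by
            apply mul_le_mul_of_nonneg_left _ (by positivity)
            have q1 : (1 + ξ ^ 2) ^ σ * a ^ 2 ≤ W * (1 + (N * (ξ - n)) ^ 2) ^ σ * a ^ 2 :=
              mul_le_mul_of_nonneg_right hw₁ (sq_nonneg a)
            have q2 : (1 + ξ ^ 2) ^ σ * b ^ 2 ≤ W * (1 + (N * (ξ + n)) ^ 2) ^ σ * b ^ 2 := by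
              have he : (1 + (N * (ξ - -(n:ℝ))) ^ 2) = (1 + (N * (ξ + n)) ^ 2) := by ring_nf
              rw [he] at hw₂
              exact mul_le_mul_of_nonneg_right hw₂ (sq_nonneg b)
            linarith
        _ = B * (g (N * (ξ - n)) + g (N * (ξ + n))) := by rw [hg₁, hg₂, hB]; ring
    exact habs _ hnorm
  -- integral bound
  have hgi₁ : Integrable (fun ξ : ℝ => g (N * (ξ - n))) := by
    simpa using (hg.comp_mul_left' hN0.ne').comp_sub_right (n:ℝ)
  have hgi₂ : Integrable (fun ξ : ℝ => g (N * (ξ + n))) := by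
    simpa using (hg.comp_mul_left' hN0.ne').comp_add_right (n:ℝ)
  have e₁ : (∫ ξ : ℝ, g (N * (ξ - n))) = N⁻¹ * K := by
    rw [show (fun ξ : ℝ => g (N * (ξ - (n:ℝ)))) = fun ξ : ℝ => (fun y => g (N * y)) (ξ - (n:ℝ))
      from rfl]
    rw [integral_sub_right_eq_self (fun y : ℝ => g (N * y)) (n:ℝ),
      MeasureTheory.Measure.integral_comp_mul_left g N, abs_of_pos (inv_pos.2 hN0),
      smul_eq_mul, hK]
  have e₂ : (∫ ξ : ℝ, g (N * (ξ + n))) = N⁻¹ * K := by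
    rw [show (fun ξ : ℝ => g (N * (ξ + (n:ℝ)))) = fun ξ : ℝ => (fun y => g (N * y)) (ξ + (n:ℝ))
      from rfl]
    rw [integral_add_right_eq_self (fun y : ℝ => g (N * y)) (n:ℝ),
      MeasureTheory.Measure.integral_comp_mul_left g N, abs_of_pos (inv_pos.2 hN0),
      smul_eq_mul, hK]
  have hI : (∫ ξ : ℝ, (1 + ξ ^ 2) ^ σ *
      ‖fourierHat (fun x => (c : ℂ) * φc (x / N) *
          Complex.cos ((((n:ℝ) * x - α : ℝ)) : ℂ)) ξ‖ ^ 2)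
      ≤ B * (N⁻¹ * K + N⁻¹ * K) := by
    calc (∫ ξ : ℝ, (1 + ξ ^ 2) ^ σ *
        ‖fourierHat (fun x => (c : ℂ) * φc (x / N) *
            Complex.cos ((((n:ℝ) * x - α : ℝ)) : ℂ)) ξ‖ ^ 2)
        ≤ ∫ ξ : ℝ, B * (g (N * (ξ - n)) + g (N * (ξ + n))) := by
          refine integral_mono_of_nonneg (ae_of_all _ fun ξ => ?_)
            (((hgi₁.add hgi₂).const_mul B)) (ae_of_all _ hpt)
          have : (0:ℝ) ≤ (1 + ξ ^ 2) ^ σ := Real.rpow_nonneg (by positivity) σ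
          positivity
      _ = B * ((∫ ξ : ℝ, g (N * (ξ - n))) + ∫ ξ : ℝ, g (N * (ξ + n))) := by
          rw [integral_const_mul, integral_add hgi₁ hgi₂]
      _ = B * (N⁻¹ * K + N⁻¹ * K) := by rw [e₁, e₂]
  -- constant algebra
  have hBKD : B * (N⁻¹ * K + N⁻¹ * K) = D * P ^ 2 := by
    have hsq2 : ((Real.sqrt (2 * Real.pi))⁻¹) ^ 2 = (2 * Real.pi)⁻¹ := by
      rw [inv_pow, Real.sq_sqrt (by positivity)]
    have rp2 : ∀ x : ℝ, ((n:ℝ) ^ x) ^ 2 = (n:ℝ) ^ (2 * x) := by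
      intro x
      rw [← Real.rpow_natCast ((n:ℝ) ^ x) 2, ← Real.rpow_mul hn0.le]
      norm_num [mul_comm]
    have h2 : c ^ 2 * N = (n:ℝ) ^ (-2 * s) := by
      rw [hc, hNdef, rp2, ← Real.rpow_add hn0]
      congr 1
      ring
    have h3 : W = 3 ^ σ * (n:ℝ) ^ (2 * σ) := by
      rw [hW, Real.mul_rpow (by norm_num) (by positivity)]
      congr 1
      rw [← Real.rpow_natCast (n:ℝ) 2, ← Real.rpow_mul hn0.le]
      norm_num [mul_comm]
    have h4 : P ^ 2 = (n:ℝ) ^ (2 * σ) * (n:ℝ) ^ (-2 * s) := by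
      rw [hP, rp2, ← Real.rpow_add hn0]
      congr 1
      ring
    rw [hB, ht, hD, h3, h4, mul_pow, hsq2]
    have hNne : N ≠ 0 := hN0.ne'
    have hπne : Real.pi ≠ 0 := hπ.ne'
    rw [neg_mul] at h2
    field_simp
    rw [← h2]
    ring
  -- conclude
  show (∫ ξ : ℝ, (1 + ξ ^ 2) ^ σ *
      ‖fourierHat (fun x => ((c * φ (x / N) * Real.cos ((n:ℝ) * x - α) : ℝ) : ℂ)) ξ‖ ^ 2)
        ^ (1/2 : ℝ) ≤ (Real.sqrt D + 1) * P
  rw [hfun]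
  have hI0 : (0:ℝ) ≤ ∫ ξ : ℝ, (1 + ξ ^ 2) ^ σ *
      ‖fourierHat (fun x => (c : ℂ) * φc (x / N) *
          Complex.cos ((((n:ℝ) * x - α : ℝ)) : ℂ)) ξ‖ ^ 2 := by
    refine integral_nonneg fun ξ => ?_
    have : (0:ℝ) ≤ (1 + ξ ^ 2) ^ σ := Real.rpow_nonneg (by positivity) σ
    positivity
  calc (∫ ξ : ℝ, (1 + ξ ^ 2) ^ σ *
      ‖fourierHat (fun x => (c : ℂ) * φc (x / N) *
          Complex.cos ((((n:ℝ) * x - α : ℝ)) : ℂ)) ξ‖ ^ 2) ^ (1/2 : ℝ)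
      ≤ (D * P ^ 2) ^ (1/2 : ℝ) := by
        apply Real.rpow_le_rpow hI0 (hI.trans_eq hBKD) (by norm_num)
    _ = Real.sqrt (D * P ^ 2) := (Real.sqrt_eq_rpow _).symm
    _ = Real.sqrt D * P := by
        rw [Real.sqrt_mul hD0, Real.sqrt_sq hP0.le]
    _ ≤ (Real.sqrt D + 1) * P :=
        mul_le_mul_of_nonneg_right (le_add_of_nonneg_right zero_le_one) hP0.le
end

section
/- Let φ be a Schwartz function on ℝ, δ > 0, s ≥ 0 and t ∈ ℝ. Then lim_{n→∞} ‖n^{−δ/2−s} φ(x/n^δ) (cos(nx + 2t) − cos(nx))‖_{H^s} = √2 |sin t| · ‖φ‖_{L²}. -/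
open MeasureTheory Filter

/-- The `L²(ℝ)` norm. -/
noncomputable def l2Norm (f : ℝ → ℝ) : ℝ := (∫ x : ℝ, (f x) ^ 2) ^ (1/2 : ℝ)


section HS12aux
open Complex Real FourierTransform

namespace HS12

lemma sqrt2pi_pos : 0 < Real.sqrt (2 * Real.pi) := Real.sqrt_pos.mpr (by positivity)

lemma sqrt2pi_ne : ((Real.sqrt (2 * Real.pi) : ℝ) : ℂ) ≠ 0 := by
  simpa [Complex.ofReal_eq_zero] using sqrt2pi_pos.ne'

/-- Complexification of a real Schwartz function. -/
noncomputable def cplx (φ : SchwartzMap ℝ ℝ) : SchwartzMap ℝ ℂ where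
  toFun x := (φ x : ℂ)
  smooth' := Complex.ofRealCLM.contDiff.comp φ.smooth'
  decay' := by
    intro k n
    obtain ⟨C, hC⟩ := φ.decay' k n
    refine ⟨C, fun x => ?_⟩
    have h : ‖iteratedFDeriv ℝ n (fun y : ℝ => ((φ y : ℝ) : ℂ)) x‖
        = ‖iteratedFDeriv ℝ n (⇑φ) x‖ := by
      have := (RCLike.ofRealLI (K := ℂ)).norm_iteratedFDeriv_comp_left
        (f := ⇑φ) (x := x) (φ.smooth ⊤).contDiffAt (i := n) (by exact_mod_cast le_top)
      simpa [Function.comp_def, RCLike.ofRealLI_apply] using this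
    rw [h]; exact hC x

@[simp] lemma cplx_apply (φ : SchwartzMap ℝ ℝ) (x : ℝ) : cplx φ x = (φ x : ℂ) := rfl

lemma fourierHat_eq (f : ℝ → ℂ) (ξ : ℝ) :
    fourierHat f ξ = ((Real.sqrt (2 * Real.pi) : ℝ) : ℂ)⁻¹ *
      𝓕 f (ξ / (2 * Real.pi)) := by
  rw [fourierHat, Real.fourier_real_eq_integral_exp_smul]
  have h1 : ∀ x : ℝ, -2 * Real.pi * x * (ξ / (2 * Real.pi)) = -(ξ * x) := by
    intro x
    field_simp
  congr 1
  simp only [h1, smul_eq_mul]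
  have h2 : ∀ x : ℝ, ((-(ξ * x) : ℝ) : ℂ) * Complex.I = -(Complex.I * (ξ:ℂ) * (x:ℂ)) := by
    intro x; push_cast; ring
  simp only [h2]

/-- Multiplication by a nonzero constant, as a continuous linear equivalence of `ℝ`. -/
noncomputable def mulCLE (c : ℝ) (hc : c ≠ 0) : ℝ ≃L[ℝ] ℝ :=
  { LinearEquiv.smulOfNeZero ℝ ℝ c hc with
    continuous_toFun := (LinearEquiv.smulOfNeZero ℝ ℝ c hc).toLinearMap.continuous_of_finiteDimensional
    continuous_invFun := (LinearEquiv.smulOfNeZero ℝ ℝ c hc).symm.toLinearMap.continuous_of_finiteDimensional }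

lemma mulCLE_apply (c : ℝ) (hc : c ≠ 0) (x : ℝ) : mulCLE c hc x = c * x := rfl

/-- The unitary Fourier transform of (the complexification of) a real Schwartz function,
as a Schwartz function. -/
noncomputable def ghatS (φ : SchwartzMap ℝ ℝ) : SchwartzMap ℝ ℂ :=
  (((Real.sqrt (2 * Real.pi) : ℝ) : ℂ))⁻¹ •
    (SchwartzMap.compCLMOfContinuousLinearEquiv ℂ
      (mulCLE (2 * Real.pi)⁻¹ (by positivity))
      (𝓕 (cplx φ)))

lemma ghatS_apply (φ : SchwartzMap ℝ ℝ) (ξ : ℝ) :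
    ghatS φ ξ = fourierHat (fun x => (φ x : ℂ)) ξ := by
  rw [fourierHat_eq]
  have : (fun x => (φ x : ℂ)) = ⇑(cplx φ) := rfl
  rw [this]
  simp only [ghatS, SchwartzMap.smul_apply, SchwartzMap.compCLMOfContinuousLinearEquiv_apply,
    SchwartzMap.fourier_coe, Function.comp_apply, mulCLE_apply, smul_eq_mul]
  congr 2
  field_simp


lemma fourier_conj (h : ℝ → ℂ) (x : ℝ) :
    𝓕 (fun v => (starRingEnd ℂ) (h v)) x
      = (starRingEnd ℂ) (𝓕 h (-x)) := by
  rw [Real.fourier_real_eq_integral_exp_smul,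
    Real.fourier_real_eq_integral_exp_smul, ← integral_conj]
  have : ∀ v : ℝ, Complex.exp (((-2 * Real.pi * v * x : ℝ)) * Complex.I) • (starRingEnd ℂ) (h v)
      = (starRingEnd ℂ) (Complex.exp (((-2 * Real.pi * v * (-x) : ℝ)) * Complex.I) • h v) := by
    intro v
    simp only [smul_eq_mul, map_mul, ← Complex.exp_conj, map_mul, Complex.conj_ofReal,
      Complex.conj_I]
    push_cast
    ring_nf
  simp only [this]

/-- Parseval for Schwartz functions (mathlib convention). -/
lemma parseval (Φ : SchwartzMap ℝ ℂ) :
    ∫ v : ℝ, ‖𝓕 (⇑Φ) v‖ ^ 2 = ∫ x : ℝ, ‖Φ x‖ ^ 2 := by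
  set Ψ : SchwartzMap ℝ ℂ := 𝓕 Φ with hΨdef
  have hΨ : ⇑Ψ = 𝓕 (⇑Φ) := SchwartzMap.fourier_coe Φ
  have hg : Integrable (fun v => (starRingEnd ℂ) (Ψ v)) := by
    refine Ψ.integrable.norm.mono' ?_ ?_
    · exact (Complex.continuous_conj.comp Ψ.continuous).aestronglyMeasurable
    · filter_upwards with v
      simp
  have hflip : (innerₗ ℝ).flip = innerₗ ℝ := by
    apply LinearMap.ext; intro x; apply LinearMap.ext; intro y
    simp [real_inner_comm]
  have key := VectorFourier.integral_fourierIntegral_smul_eq_flip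
    (e := Real.fourierChar) (L := innerₗ ℝ) (μ := volume) (ν := volume)
    Real.continuous_fourierChar (by simpa using continuous_inner (𝕜 := ℝ) (E := ℝ))
    Φ.integrable hg
  rw [hflip] at key
  have L1 : ∀ ξ : ℝ, VectorFourier.fourierIntegral Real.fourierChar volume (innerₗ ℝ) (⇑Φ) ξ
      = Ψ ξ := fun ξ => by rw [hΨ]; rfl
  have L2 : ∀ x : ℝ, VectorFourier.fourierIntegral Real.fourierChar volume (innerₗ ℝ)
      (fun v => (starRingEnd ℂ) (Ψ v)) x = (starRingEnd ℂ) (Φ x) := by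
    intro x
    have : VectorFourier.fourierIntegral Real.fourierChar volume (innerₗ ℝ)
        (fun v => (starRingEnd ℂ) (Ψ v)) x
        = 𝓕 (fun v => (starRingEnd ℂ) (Ψ v)) x := rfl
    rw [this, fourier_conj]
    congr 1
    have h1 : 𝓕 (⇑Ψ) (-x) = 𝓕⁻ (⇑Ψ) x :=
      (Real.fourierInv_eq_fourier_neg (⇑Ψ) x).symm
    rw [h1, hΨ]
    rw [Continuous.fourierInv_fourier_eq Φ.continuous Φ.integrable (by rw [← hΨ]; exact Ψ.integrable)]
  simp only [L1, L2, smul_eq_mul] at key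
  have e1 : ∀ z : ℂ, z * (starRingEnd ℂ) z = ((‖z‖ ^ 2 : ℝ) : ℂ) := by
    intro z
    rw [Complex.mul_conj]
    norm_cast
    rw [Complex.normSq_eq_norm_sq]
  simp only [e1] at key
  rw [← hΨ]
  have k2 : ((∫ v:ℝ, ‖Ψ v‖^2 : ℝ) : ℂ) = ((∫ x:ℝ, ‖Φ x‖^2 : ℝ) : ℂ) := by
    rw [show ((∫ v:ℝ, ‖Ψ v‖^2 : ℝ) : ℂ) = ∫ v:ℝ, ((‖Ψ v‖^2 : ℝ) : ℂ) from integral_ofReal.symm,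
      show ((∫ x:ℝ, ‖Φ x‖^2 : ℝ) : ℂ) = ∫ x:ℝ, ((‖Φ x‖^2 : ℝ) : ℂ) from integral_ofReal.symm]
    exact key
  exact_mod_cast k2



lemma hat_formula (φ : SchwartzMap ℝ ℝ) {a : ℝ} (ha : 0 < a) (c b t ξ : ℝ) :
    fourierHat (fun x => ((c * φ (x / a) * (Real.cos (b * x + 2 * t) - Real.cos (b * x)) : ℝ) : ℂ)) ξ
      = (c : ℂ) * ((Real.sin t : ℝ) : ℂ) * Complex.I * (a : ℂ) *
        (Complex.exp (((t : ℝ) : ℂ) * Complex.I) * ghatS φ (a * (ξ - b)) -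
         Complex.exp ((((-t) : ℝ) : ℂ) * Complex.I) * ghatS φ (a * (ξ + b))) := by
  have hE : ∀ η : ℝ, Integrable
      (fun x : ℝ => Complex.exp (-(Complex.I * ((η : ℝ) : ℂ) * (x : ℂ))) * ((φ (x / a) : ℝ) : ℂ)) := by
    intro η
    refine Integrable.bdd_mul (c := 1) ?_ ?_ (ae_of_all _ fun x => ?_)
    · exact ((cplx φ).integrable).comp_div ha.ne'
    · exact (((continuous_const.mul Complex.continuous_ofReal).neg).cexp).aestronglyMeasurable
    · rw [Complex.norm_exp]
      simp
  have hpt : ∀ x : ℝ, Complex.exp (-(Complex.I * (ξ : ℂ) * (x : ℂ))) *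
        ((c * φ (x / a) * (Real.cos (b * x + 2 * t) - Real.cos (b * x)) : ℝ) : ℂ)
      = ((c : ℂ) * ((Real.sin t : ℝ) : ℂ) * Complex.I) *
        (Complex.exp (((t : ℝ) : ℂ) * Complex.I) *
            (Complex.exp (-(Complex.I * ((ξ - b : ℝ) : ℂ) * (x : ℂ))) * ((φ (x / a) : ℝ) : ℂ))
         - Complex.exp ((((-t) : ℝ) : ℂ) * Complex.I) *
            (Complex.exp (-(Complex.I * ((ξ + b : ℝ) : ℂ) * (x : ℂ))) * ((φ (x / a) : ℝ) : ℂ))) := by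
    intro x
    have hcc : Real.cos (b * x + 2 * t) - Real.cos (b * x)
        = -2 * Real.sin (b * x + t) * Real.sin t := by
      rw [Real.cos_sub_cos]
      have h1 : (b * x + 2 * t + b * x) / 2 = b * x + t := by ring
      have h2 : (b * x + 2 * t - b * x) / 2 = t := by ring
      rw [h1, h2]
    rw [hcc]
    have sdef : ∀ z : ℂ, Complex.sin z
        = (Complex.exp (-z * Complex.I) - Complex.exp (z * Complex.I)) * Complex.I / 2 :=
      fun z => rfl
    push_cast
    rw [sdef, sdef]
    simp only [neg_mul]
    have d1 : Complex.exp (-(((b : ℂ) * (x : ℂ) + (t : ℂ)) * Complex.I))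
        = Complex.exp (-(Complex.I * (b : ℂ) * (x : ℂ))) * Complex.exp (-((t : ℂ) * Complex.I)) := by
      rw [← Complex.exp_add]; congr 1; ring
    have d2 : Complex.exp (((b : ℂ) * (x : ℂ) + (t : ℂ)) * Complex.I)
        = Complex.exp (Complex.I * (b : ℂ) * (x : ℂ)) * Complex.exp ((t : ℂ) * Complex.I) := by
      rw [← Complex.exp_add]; congr 1; ring
    have d3 : Complex.exp (-(Complex.I * ((ξ : ℂ) - (b : ℂ)) * (x : ℂ)))
        = Complex.exp (-(Complex.I * (ξ : ℂ) * (x : ℂ))) * Complex.exp (Complex.I * (b : ℂ) * (x : ℂ)) := by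
      rw [← Complex.exp_add]; congr 1; ring
    have d4 : Complex.exp (-(Complex.I * ((ξ : ℂ) + (b : ℂ)) * (x : ℂ)))
        = Complex.exp (-(Complex.I * (ξ : ℂ) * (x : ℂ))) * Complex.exp (-(Complex.I * (b : ℂ) * (x : ℂ))) := by
      rw [← Complex.exp_add]; congr 1; ring
    rw [d1, d2, d3, d4]
    ring
  unfold fourierHat
  simp only [hpt]
  rw [integral_const_mul, integral_sub ((hE (ξ - b)).const_mul _) ((hE (ξ + b)).const_mul _),
    integral_const_mul, integral_const_mul]
  have scale : ∀ η : ℝ, (∫ x : ℝ, Complex.exp (-(Complex.I * ((η : ℝ) : ℂ) * (x : ℂ))) * ((φ (x / a) : ℝ) : ℂ))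
      = (a : ℂ) * (((Real.sqrt (2 * Real.pi) : ℝ) : ℂ) * ghatS φ (a * η)) := by
    intro η
    have hsub : ∀ x : ℝ, Complex.exp (-(Complex.I * ((η : ℝ) : ℂ) * (x : ℂ))) * ((φ (x / a) : ℝ) : ℂ)
        = (fun y : ℝ => Complex.exp (-(Complex.I * ((a * η : ℝ) : ℂ) * (y : ℂ))) * ((φ y : ℝ) : ℂ)) (x / a) := by
      intro x
      simp only
      congr 1
      congr 1
      have hx : (a : ℂ) ≠ 0 := Complex.ofReal_ne_zero.mpr ha.ne'
      push_cast
      field_simp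
    simp only [hsub]
    rw [MeasureTheory.Measure.integral_comp_div
      (fun y : ℝ => Complex.exp (-(Complex.I * ((a * η : ℝ) : ℂ) * (y : ℂ))) * ((φ y : ℝ) : ℂ)) a]
    rw [abs_of_pos ha, Complex.real_smul]
    congr 1
    rw [ghatS_apply]
    unfold fourierHat
    rw [← mul_assoc, mul_inv_cancel₀ sqrt2pi_ne, one_mul]
  rw [scale (ξ - b), scale (ξ + b)]
  set K : ℂ := ((Real.sqrt (2 * Real.pi) : ℝ) : ℂ) with hKdef
  have hK : K ≠ 0 := sqrt2pi_ne
  field_simp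


/-- The weight appearing after substitution. -/
noncomputable def pfun (s δ : ℝ) (n : ℕ) (ε : ℝ) (u : ℝ) : ℝ :=
  (n : ℝ) ^ (-(2 * s)) * (1 + (ε * n + u / (n : ℝ) ^ δ) ^ 2) ^ s

lemma pfun_nonneg (s δ : ℝ) (n : ℕ) (ε u : ℝ) : 0 ≤ pfun s δ n ε u := by
  unfold pfun; positivity

lemma pfun_continuous (s δ : ℝ) (n : ℕ) (ε : ℝ) (hs : 0 ≤ s) :
    Continuous (fun u : ℝ => pfun s δ n ε u) := by
  unfold pfun
  refine continuous_const.mul ?_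
  refine Continuous.rpow_const ?_ (fun x => Or.inr hs)
  exact continuous_const.add ((continuous_const.add (continuous_id.div_const _)).pow 2)

lemma pfun_bound {s δ : ℝ} (hδ : 0 < δ) (hs : 0 ≤ s) {n : ℕ} (hn : 1 ≤ n) {ε : ℝ}
    (hε : ε = 1 ∨ ε = -1) (u : ℝ) :
    pfun s δ n ε u ≤ 4 ^ s * (1 + u ^ 2) ^ s := by
  have hm : (1:ℝ) ≤ (n:ℝ) := by exact_mod_cast hn
  have hm0 : (0:ℝ) < (n:ℝ) := by linarith
  have ha1 : (1:ℝ) ≤ (n:ℝ) ^ δ := Real.one_le_rpow hm hδ.le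
  have hε2 : ε ^ 2 = 1 := by rcases hε with h | h <;> simp [h]
  have hv2 : (u / (n:ℝ)^δ) ^ 2 ≤ u ^ 2 := by
    rw [div_pow]
    have h2 : (1:ℝ) ≤ ((n:ℝ)^δ)^2 := by nlinarith
    exact div_le_self (sq_nonneg u) h2
  have key : 1 + (ε * n + u / (n:ℝ)^δ) ^ 2 ≤ 2 * (1 + (n:ℝ)^2) * (1 + u^2) := by
    nlinarith [sq_nonneg (ε * n - u / (n:ℝ)^δ), hv2, sq_nonneg u, sq_nonneg ((n:ℝ)),
      mul_nonneg (sq_nonneg ((n:ℝ))) (sq_nonneg u)]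
  have h1 : (1 + (ε * n + u / (n:ℝ)^δ) ^ 2) ^ s ≤ (2 * (1 + (n:ℝ)^2) * (1 + u^2)) ^ s :=
    Real.rpow_le_rpow (by positivity) key hs
  have h2 : (2 * (1 + (n:ℝ)^2) * (1 + u^2)) ^ s = 2^s * (1 + (n:ℝ)^2)^s * (1 + u^2)^s := by
    rw [Real.mul_rpow (by positivity) (by positivity), Real.mul_rpow (by positivity) (by positivity)]
  have h3 : (1 + (n:ℝ)^2) ^ s ≤ (2 * (n:ℝ)^2) ^ s :=
    Real.rpow_le_rpow (by positivity) (by nlinarith) hs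
  have h4 : (2 * (n:ℝ)^2 : ℝ) ^ s = 2^s * ((n:ℝ)^2)^s := Real.mul_rpow (by norm_num) (by positivity)
  have h5 : (n:ℝ) ^ (-(2*s)) * ((n:ℝ)^2)^s = 1 := by
    have e1 : (((n:ℝ))^2)^s = (n:ℝ)^(2*s) := by
      rw [← Real.rpow_natCast (n:ℝ) 2, ← Real.rpow_mul hm0.le]
      norm_num
    rw [e1, ← Real.rpow_add hm0]
    simp
  have h24 : (2:ℝ)^s * 2^s = 4^s := by
    rw [← Real.mul_rpow (by norm_num) (by norm_num)]
    norm_num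
  have hstep : (1 + (ε * n + u / (n:ℝ)^δ) ^ 2) ^ s
      ≤ 2^s * (2^s * ((n:ℝ)^2)^s) * (1 + u^2)^s := by
    refine (h1.trans_eq h2).trans ?_
    have := h3.trans_eq h4
    have hnn : (0:ℝ) ≤ (1+u^2)^s := by positivity
    nlinarith [Real.rpow_nonneg (by norm_num : (0:ℝ) ≤ 2) s,
      Real.rpow_nonneg (by positivity : (0:ℝ) ≤ ((n:ℝ)^2)) s,
      mul_le_mul_of_nonneg_right (mul_le_mul_of_nonneg_left this (Real.rpow_nonneg (by norm_num : (0:ℝ) ≤ 2) s)) hnn]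
  calc pfun s δ n ε u
      = (n:ℝ)^(-(2*s)) * (1 + (ε * n + u / (n:ℝ)^δ) ^ 2) ^ s := rfl
    _ ≤ (n:ℝ)^(-(2*s)) * (2^s * (2^s * ((n:ℝ)^2)^s) * (1 + u^2)^s) :=
        mul_le_mul_of_nonneg_left hstep (Real.rpow_nonneg hm0.le _)
    _ = ((n:ℝ)^(-(2*s)) * ((n:ℝ)^2)^s) * (2^s * 2^s) * (1 + u^2)^s := by ring
    _ = 4^s * (1 + u^2)^s := by rw [h5, h24, one_mul]

lemma pfun_tendsto {s δ : ℝ} (hδ : 0 < δ) (hs : 0 ≤ s) {ε : ℝ} (hε : ε = 1 ∨ ε = -1) (u : ℝ) :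
    Tendsto (fun n : ℕ => pfun s δ n ε u) atTop (nhds 1) := by
  have hε2 : ε ^ 2 = 1 := by rcases hε with h | h <;> simp [h]
  have t1 : Tendsto (fun n : ℕ => (n:ℝ)^(-(2:ℝ))) atTop (nhds 0) :=
    (tendsto_rpow_neg_atTop (by norm_num)).comp tendsto_natCast_atTop_atTop
  have t2 : Tendsto (fun n : ℕ => (((n:ℝ))^(δ+1))⁻¹) atTop (nhds 0) :=
    ((tendsto_rpow_atTop (by linarith)).comp tendsto_natCast_atTop_atTop).inv_tendsto_atTop
  have t3 : Tendsto (fun n : ℕ => ε + u * (((n:ℝ))^(δ+1))⁻¹) atTop (nhds (ε + u * 0)) :=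
    tendsto_const_nhds.add (tendsto_const_nhds.mul t2)
  have hbase : Tendsto (fun n : ℕ => (n:ℝ)^(-(2:ℝ)) + (ε + u * (((n:ℝ))^(δ+1))⁻¹)^2) atTop (nhds 1) := by
    have := t1.add (t3.pow 2)
    simpa [hε2] using this
  have hrpow := hbase.rpow_const (Or.inr hs)
  rw [Real.one_rpow] at hrpow
  refine Tendsto.congr' ?_ hrpow
  filter_upwards [eventually_ge_atTop 1] with n hn
  have hm : (1:ℝ) ≤ (n:ℝ) := by exact_mod_cast hn
  have hm0 : (0:ℝ) < (n:ℝ) := by linarith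
  have ha0 : (0:ℝ) < (n:ℝ)^δ := Real.rpow_pos_of_pos hm0 δ
  have e0 : (n:ℝ)^(-(2:ℝ)) + (ε + u * (((n:ℝ))^(δ+1))⁻¹)^2
      = (n:ℝ)^(-(2:ℝ)) * (1 + (ε * n + u / (n:ℝ)^δ)^2) := by
    have e1 : (n:ℝ)^(-(2:ℝ)) = (((n:ℝ))^2)⁻¹ := by
      rw [Real.rpow_neg hm0.le, show ((2:ℝ)) = ((2:ℕ):ℝ) by norm_num, Real.rpow_natCast]
    have e2 : (n:ℝ)^(δ+1) = (n:ℝ)^δ * n := by rw [Real.rpow_add hm0, Real.rpow_one]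
    rw [e1, e2]
    field_simp
  rw [e0, Real.mul_rpow (by positivity) (by positivity)]
  have e3 : ((n:ℝ)^(-(2:ℝ)))^s = (n:ℝ)^(-(2*s)) := by
    rw [← Real.rpow_mul hm0.le]
    ring_nf
  rw [e3]
  rfl

lemma integrable_poly_mul {s : ℝ} (hs : 0 ≤ s) (h : SchwartzMap ℝ ℂ) :
    Integrable (fun u : ℝ => (1 + u^2)^s * ‖h u‖) := by
  set N : ℕ := ⌈s⌉₊ with hN
  have hb : ∀ u : ℝ, (1 + u^2)^s ≤ 2^N * (1 + (u^2)^N) := by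
    intro u
    have h1 : (1+u^2)^s ≤ (1+u^2)^(N:ℝ) :=
      Real.rpow_le_rpow_of_exponent_le (by nlinarith [sq_nonneg u]) (Nat.le_ceil s)
    rw [Real.rpow_natCast] at h1
    refine h1.trans ?_
    calc (1+u^2)^N ≤ (2 * max 1 (u^2))^N := by
          apply pow_le_pow_left₀ (by positivity)
          rcases le_total (u^2) 1 with h | h
          · rw [max_eq_left h]; linarith
          · rw [max_eq_right h]; linarith
      _ = 2^N * (max 1 (u^2))^N := mul_pow 2 _ N
      _ ≤ 2^N * (1 + (u^2)^N) := by
          refine mul_le_mul_of_nonneg_left ?_ (by positivity)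
          rcases le_total (u^2) 1 with h | h
          · rw [max_eq_left h, one_pow]
            nlinarith [pow_nonneg (sq_nonneg u) N]
          · rw [max_eq_right h]
            nlinarith [pow_nonneg (sq_nonneg u) N]
  have base : Integrable (fun u : ℝ => (2:ℝ)^N * (‖u‖^0 * ‖h u‖ + ‖u‖^(2*N) * ‖h u‖)) :=
    ((h.integrable_pow_mul volume 0).add (h.integrable_pow_mul volume (2*N))).const_mul _
  refine base.mono' ?_ (ae_of_all _ fun u => ?_)
  · refine Continuous.aestronglyMeasurable ?_
    refine Continuous.mul ?_ h.continuous.norm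
    refine Continuous.rpow_const ?_ (fun x => Or.inr hs)
    exact continuous_const.add (continuous_pow 2)
  · have h2n : ‖u‖^(2*N) = (u^2)^N := by
      rw [Real.norm_eq_abs, pow_mul, _root_.sq_abs]
    rw [Real.norm_eq_abs, _root_.abs_of_nonneg (by positivity)]
    calc (1+u^2)^s * ‖h u‖ ≤ (2^N * (1 + (u^2)^N)) * ‖h u‖ :=
          mul_le_mul_of_nonneg_right (hb u) (norm_nonneg _)
      _ = (2:ℝ)^N * (‖u‖^0 * ‖h u‖ + ‖u‖^(2*N) * ‖h u‖) := by
          rw [pow_zero, h2n]; ring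

lemma norm_schwartz_bound (h : SchwartzMap ℝ ℂ) : ∃ C, 0 < C ∧ ∀ u, ‖h u‖ ≤ C := by
  obtain ⟨C, hC0, hC⟩ := h.decay 0 0
  refine ⟨C, hC0, fun u => ?_⟩
  have := hC u
  simpa [norm_iteratedFDeriv_zero] using this

lemma integrable_poly_mul_sq {s : ℝ} (hs : 0 ≤ s) (h : SchwartzMap ℝ ℂ) :
    Integrable (fun u : ℝ => (1 + u^2)^s * ‖h u‖^2) := by
  obtain ⟨C, hC0, hC⟩ := norm_schwartz_bound h
  refine ((integrable_poly_mul hs h).const_mul C).mono' ?_ (ae_of_all _ fun u => ?_)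
  · refine Continuous.aestronglyMeasurable ?_
    refine Continuous.mul ?_ (h.continuous.norm.pow 2)
    refine Continuous.rpow_const ?_ (fun x => Or.inr hs)
    exact continuous_const.add (continuous_pow 2)
  · rw [Real.norm_eq_abs, _root_.abs_of_nonneg (by positivity)]
    have h1 : (0:ℝ) ≤ (1+u^2)^s := by positivity
    have h2 := hC u
    have h3 := norm_nonneg (h u)
    calc (1+u^2)^s * ‖h u‖^2 ≤ (1+u^2)^s * (C * ‖h u‖) := by
          have h4 : ‖h u‖^2 ≤ C * ‖h u‖ := by nlinarith
          exact mul_le_mul_of_nonneg_left h4 h1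
      _ = C * ((1+u^2)^s * ‖h u‖) := by ring


lemma lim_main {s δ : ℝ} (hδ : 0 < δ) (hs : 0 ≤ s) (h : SchwartzMap ℝ ℂ) {ε : ℝ}
    (hε : ε = 1 ∨ ε = -1) :
    Tendsto (fun n : ℕ => ∫ u : ℝ, pfun s δ n ε u * ‖h u‖^2) atTop
      (nhds (∫ u : ℝ, ‖h u‖^2)) := by
  obtain ⟨C, hC0, hC⟩ := norm_schwartz_bound h
  apply tendsto_integral_filter_of_dominated_convergence
    (bound := fun u : ℝ => (4^s * C) * ((1 + u^2)^s * ‖h u‖))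
  · refine Eventually.of_forall (fun n => ?_)
    exact ((pfun_continuous s δ n ε hs).mul (h.continuous.norm.pow 2)).aestronglyMeasurable
  · filter_upwards [eventually_ge_atTop 1] with n hn
    refine ae_of_all _ (fun u => ?_)
    rw [Real.norm_eq_abs, _root_.abs_of_nonneg (mul_nonneg (pfun_nonneg s δ n ε u) (by positivity))]
    calc pfun s δ n ε u * ‖h u‖^2 ≤ (4^s * (1+u^2)^s) * ‖h u‖^2 :=
          mul_le_mul_of_nonneg_right (pfun_bound hδ hs hn hε u) (by positivity)
      _ ≤ (4^s * (1+u^2)^s) * (C * ‖h u‖) := by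
          refine mul_le_mul_of_nonneg_left ?_ (by positivity)
          have h2 := hC u
          have h3 := norm_nonneg (h u)
          nlinarith
      _ = (4^s * C) * ((1 + u^2)^s * ‖h u‖) := by ring
  · exact (integrable_poly_mul hs h).const_mul _
  · refine ae_of_all _ (fun u => ?_)
    have := (pfun_tendsto hδ hs hε u).mul_const (‖h u‖^2)
    simpa using this

lemma lim_cross {s δ : ℝ} (hδ : 0 < δ) (hs : 0 ≤ s) (h : SchwartzMap ℝ ℂ) (t : ℝ) :
    Tendsto (fun n : ℕ => ∫ u : ℝ, pfun s δ n 1 u *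
        (Complex.exp (((2*t : ℝ) : ℂ) * Complex.I) * h u *
          (starRingEnd ℂ) (h (u + 2 * (n:ℝ)^δ * (n:ℝ)))).re)
      atTop (nhds 0) := by
  obtain ⟨C, hC0, hC⟩ := norm_schwartz_bound h
  have h0 : (0:ℝ) = ∫ u : ℝ, (0:ℝ) := by simp
  rw [h0]
  apply tendsto_integral_filter_of_dominated_convergence
    (bound := fun u : ℝ => (4^s * C) * ((1 + u^2)^s * ‖h u‖))
  · refine Eventually.of_forall (fun n => ?_)
    refine Continuous.aestronglyMeasurable ?_
    refine (pfun_continuous s δ n 1 hs).mul ?_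
    refine Complex.continuous_re.comp ?_
    exact (continuous_const.mul h.continuous).mul
      (Complex.continuous_conj.comp (h.continuous.comp (continuous_id.add continuous_const)))
  · filter_upwards [eventually_ge_atTop 1] with n hn
    refine ae_of_all _ (fun u => ?_)
    have hz : ‖(Complex.exp (((2*t : ℝ) : ℂ) * Complex.I) * h u *
        (starRingEnd ℂ) (h (u + 2 * (n:ℝ)^δ * (n:ℝ))))‖
        = ‖h u‖ * ‖h (u + 2 * (n:ℝ)^δ * (n:ℝ))‖ := by
      rw [norm_mul, norm_mul]
      rw [Complex.norm_exp_ofReal_mul_I, Complex.norm_conj, one_mul]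
    have hre : |(Complex.exp (((2*t : ℝ) : ℂ) * Complex.I) * h u *
        (starRingEnd ℂ) (h (u + 2 * (n:ℝ)^δ * (n:ℝ)))).re|
        ≤ ‖h u‖ * ‖h (u + 2 * (n:ℝ)^δ * (n:ℝ))‖ := by
      rw [← hz]
      exact Complex.abs_re_le_norm _
    rw [Real.norm_eq_abs, abs_mul, _root_.abs_of_nonneg (pfun_nonneg s δ n 1 u)]
    calc pfun s δ n 1 u * |(Complex.exp (((2*t : ℝ) : ℂ) * Complex.I) * h u *
          (starRingEnd ℂ) (h (u + 2 * (n:ℝ)^δ * (n:ℝ)))).re|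
        ≤ (4^s * (1+u^2)^s) * (‖h u‖ * C) := by
          refine mul_le_mul (pfun_bound hδ hs hn (Or.inl rfl) u) ?_ (abs_nonneg _) (by positivity)
          refine hre.trans ?_
          exact mul_le_mul_of_nonneg_left (hC _) (norm_nonneg _)
      _ = (4^s * C) * ((1 + u^2)^s * ‖h u‖) := by ring
  · exact (integrable_poly_mul hs h).const_mul _
  · refine ae_of_all _ (fun u => ?_)
    have hco : Tendsto (fun n : ℕ => u + 2 * (n:ℝ)^δ * (n:ℝ)) atTop atTop := by
      refine tendsto_atTop_mono' atTop (f₁ := fun n : ℕ => u + 2 * (n:ℝ)) ?_ ?_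
      · filter_upwards [eventually_ge_atTop 1] with n hn
        have hm : (1:ℝ) ≤ (n:ℝ) := by exact_mod_cast hn
        have ha1 : (1:ℝ) ≤ (n:ℝ)^δ := Real.one_le_rpow hm hδ.le
        have : 2 * (n:ℝ) ≤ 2 * (n:ℝ)^δ * (n:ℝ) := by nlinarith
        linarith
      · exact tendsto_atTop_add_const_left _ u
          (Tendsto.const_mul_atTop (by norm_num) tendsto_natCast_atTop_atTop)
    have hcz : Tendsto (fun n : ℕ => h (u + 2 * (n:ℝ)^δ * (n:ℝ))) atTop (nhds 0) := by
      refine (zero_at_infty h).comp (hco.mono_right ?_)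
      rw [cocompact_eq_atBot_atTop]
      exact le_sup_right
    refine squeeze_zero_norm'
      (a := fun n : ℕ => (4^s * (1+u^2)^s * ‖h u‖) * ‖h (u + 2 * (n:ℝ)^δ * (n:ℝ))‖) ?_ ?_
    · filter_upwards [eventually_ge_atTop 1] with n hn
      show ‖pfun s δ n 1 u * (Complex.exp (((2*t : ℝ) : ℂ) * Complex.I) * h u *
          (starRingEnd ℂ) (h (u + 2 * (n:ℝ)^δ * (n:ℝ)))).re‖
        ≤ (4^s * (1+u^2)^s * ‖h u‖) * ‖h (u + 2 * (n:ℝ)^δ * (n:ℝ))‖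
      have hz : ‖(Complex.exp (((2*t : ℝ) : ℂ) * Complex.I) * h u *
          (starRingEnd ℂ) (h (u + 2 * (n:ℝ)^δ * (n:ℝ))))‖
          = ‖h u‖ * ‖h (u + 2 * (n:ℝ)^δ * (n:ℝ))‖ := by
        rw [norm_mul, norm_mul]
        rw [Complex.norm_exp_ofReal_mul_I, Complex.norm_conj, one_mul]
      have hre : |(Complex.exp (((2*t : ℝ) : ℂ) * Complex.I) * h u *
          (starRingEnd ℂ) (h (u + 2 * (n:ℝ)^δ * (n:ℝ)))).re|
          ≤ ‖h u‖ * ‖h (u + 2 * (n:ℝ)^δ * (n:ℝ))‖ := by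
        rw [← hz]
        exact Complex.abs_re_le_norm _
      rw [Real.norm_eq_abs, abs_mul, _root_.abs_of_nonneg (pfun_nonneg s δ n 1 u)]
      calc pfun s δ n 1 u * |(Complex.exp (((2*t : ℝ) : ℂ) * Complex.I) * h u *
            (starRingEnd ℂ) (h (u + 2 * (n:ℝ)^δ * (n:ℝ)))).re|
          ≤ (4^s * (1+u^2)^s) * (‖h u‖ * ‖h (u + 2 * (n:ℝ)^δ * (n:ℝ))‖) :=
            mul_le_mul (pfun_bound hδ hs hn (Or.inl rfl) u) hre (abs_nonneg _) (by positivity)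
        _ = (4^s * (1+u^2)^s * ‖h u‖) * ‖h (u + 2 * (n:ℝ)^δ * (n:ℝ))‖ := by ring
    · have := (hcz.norm).const_mul (4^s * (1+u^2)^s * ‖h u‖)
      simpa using this


lemma norm_mul_sq (r1 r2 r3 : ℝ) (z : ℂ) :
    ‖(r1:ℂ) * (r2:ℂ) * Complex.I * (r3:ℂ) * z‖^2 = r1^2*(r2^2*(r3^2*‖z‖^2)) := by
  simp only [norm_mul, Complex.norm_real, Real.norm_eq_abs, Complex.norm_I, mul_one, mul_pow,
    _root_.sq_abs]
  ring

lemma Qsplit (t : ℝ) (z w : ℂ) :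
    ‖Complex.exp (((t:ℝ):ℂ) * Complex.I) * z - Complex.exp ((((-t):ℝ):ℂ) * Complex.I) * w‖^2
      = ‖z‖^2 + ‖w‖^2
        - 2 * (Complex.exp (((2*t : ℝ):ℂ) * Complex.I) * z * (starRingEnd ℂ) w).re := by
  have habs1 : Complex.normSq (Complex.exp (((t:ℝ):ℂ) * Complex.I)) = 1 := by
    rw [Complex.normSq_eq_norm_sq, Complex.norm_exp_ofReal_mul_I]; norm_num
  have habs2 : Complex.normSq (Complex.exp ((((-t):ℝ):ℂ) * Complex.I)) = 1 := by
    rw [Complex.normSq_eq_norm_sq, Complex.norm_exp_ofReal_mul_I]; norm_num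
  have hconj : (starRingEnd ℂ) (Complex.exp ((((-t):ℝ):ℂ) * Complex.I))
      = Complex.exp (((t:ℝ):ℂ) * Complex.I) := by
    rw [← Complex.exp_conj]
    congr 1
    simp only [map_mul, Complex.conj_ofReal, Complex.conj_I]
    push_cast
    ring
  have hee : Complex.exp (((t:ℝ):ℂ) * Complex.I) * Complex.exp (((t:ℝ):ℂ) * Complex.I)
      = Complex.exp (((2*t : ℝ):ℂ) * Complex.I) := by
    rw [← Complex.exp_add]; congr 1; push_cast; ring
  rw [Complex.sq_norm, Complex.sq_norm, Complex.sq_norm, Complex.normSq_sub,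
    Complex.normSq_mul, Complex.normSq_mul, habs1, habs2, one_mul, one_mul]
  congr 2
  rw [map_mul, hconj]
  have : Complex.exp (((t:ℝ):ℂ) * Complex.I) * z *
      (Complex.exp (((t:ℝ):ℂ) * Complex.I) * (starRingEnd ℂ) w)
      = (Complex.exp (((t:ℝ):ℂ) * Complex.I) * Complex.exp (((t:ℝ):ℂ) * Complex.I)) *
          z * (starRingEnd ℂ) w := by ring
  rw [this, hee]

lemma integrable_pfun_mul_sq {s δ : ℝ} (hδ : 0 < δ) (hs : 0 ≤ s) {n : ℕ} (hn : 1 ≤ n) {ε : ℝ}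
    (hε : ε = 1 ∨ ε = -1) (h : SchwartzMap ℝ ℂ) :
    Integrable (fun u : ℝ => pfun s δ n ε u * ‖h u‖^2) := by
  refine ((integrable_poly_mul_sq hs h).const_mul (4^s)).mono'
    ((pfun_continuous s δ n ε hs).mul (h.continuous.norm.pow 2)).aestronglyMeasurable
    (ae_of_all _ fun u => ?_)
  rw [Real.norm_eq_abs, _root_.abs_of_nonneg (mul_nonneg (pfun_nonneg s δ n ε u) (by positivity))]
  calc pfun s δ n ε u * ‖h u‖^2 ≤ (4^s * (1+u^2)^s) * ‖h u‖^2 :=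
        mul_le_mul_of_nonneg_right (pfun_bound hδ hs hn hε u) (by positivity)
    _ = 4^s * ((1+u^2)^s * ‖h u‖^2) := by ring

lemma integral_V_eq (φ : SchwartzMap ℝ ℝ) {s δ : ℝ} (hδ : 0 < δ) (hs : 0 ≤ s) (t : ℝ)
    {n : ℕ} (hn : 1 ≤ n) :
    (∫ ξ : ℝ, (1 + ξ^2)^s * ‖fourierHat (fun x =>
        (((n:ℝ)^(-(δ/2) - s) * φ (x / (n:ℝ)^δ) *
          (Real.cos ((n:ℝ)*x + 2*t) - Real.cos ((n:ℝ)*x)) : ℝ) : ℂ)) ξ‖^2)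
    = Real.sin t^2 *
        ((∫ u : ℝ, pfun s δ n 1 u * ‖ghatS φ u‖^2)
         + (∫ u : ℝ, pfun s δ n (-1) u * ‖ghatS φ u‖^2)
         - 2 * ∫ u : ℝ, pfun s δ n 1 u *
             (Complex.exp (((2*t : ℝ) : ℂ) * Complex.I) * ghatS φ u *
               (starRingEnd ℂ) (ghatS φ (u + 2*(n:ℝ)^δ*(n:ℝ)))).re) := by
  have hn0 : (0:ℝ) < n := by exact_mod_cast hn
  have ha : (0:ℝ) < (n:ℝ)^δ := Real.rpow_pos_of_pos hn0 δ
  have hc : (0:ℝ) < (n:ℝ)^(-(δ/2)-s) := Real.rpow_pos_of_pos hn0 _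
  obtain ⟨C, hC0, hC⟩ := norm_schwartz_bound (ghatS φ)
  set a : ℝ := (n:ℝ)^δ with hadef
  set c : ℝ := (n:ℝ)^(-(δ/2)-s) with hcdef
  have hkey : c^2 * a^2 = a * (n:ℝ)^(-(2*s)) := by
    have hp2 : ∀ e : ℝ, ((n:ℝ)^e)^2 = (n:ℝ)^(e*2) := fun e => by
      rw [← Real.rpow_natCast ((n:ℝ)^e) 2, ← Real.rpow_mul hn0.le]
      norm_num
    rw [hcdef, hadef, hp2, hp2, ← Real.rpow_add hn0, ← Real.rpow_add hn0]
    congr 1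
    ring
  have hshift : ∀ u : ℝ, pfun s δ n 1 (u - 2*a*(n:ℝ)) = pfun s δ n (-1) u := by
    intro u
    simp only [pfun]
    rw [← hadef]
    congr 2
    field_simp
    ring
  set G : ℝ → ℝ := fun u => a * (Real.sin t^2 * (pfun s δ n 1 u *
      ‖Complex.exp (((t:ℝ):ℂ) * Complex.I) * ghatS φ u -
        Complex.exp ((((-t):ℝ):ℂ) * Complex.I) * ghatS φ (u + 2*a*(n:ℝ))‖^2)) with hGdef
  have step1 : ∀ ξ : ℝ, (1 + ξ^2)^s * ‖fourierHat (fun x =>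
        ((c * φ (x / a) * (Real.cos ((n:ℝ)*x + 2*t) - Real.cos ((n:ℝ)*x)) : ℝ) : ℂ)) ξ‖^2
      = (fun y : ℝ => G (a * y)) (ξ - (n:ℝ)) := by
    intro ξ
    rw [hat_formula φ ha c (n:ℝ) t ξ, norm_mul_sq]
    simp only [hGdef]
    have harg : a*(ξ-(n:ℝ)) + 2*a*(n:ℝ) = a*(ξ+(n:ℝ)) := by ring
    rw [harg]
    simp only [pfun]
    rw [← hadef]
    have harg2 : (1:ℝ)*(n:ℝ) + (a*(ξ-(n:ℝ)))/a = ξ := by field_simp; ring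
    rw [harg2]
    linear_combination (Real.sin t^2 * (1+ξ^2)^s *
      ‖Complex.exp (((t:ℝ):ℂ) * Complex.I) * ghatS φ (a*(ξ-(n:ℝ))) -
        Complex.exp ((((-t):ℝ):ℂ) * Complex.I) * ghatS φ (a*(ξ+(n:ℝ)))‖^2) * hkey
  -- integrability facts
  have IT1 : Integrable (fun u : ℝ => pfun s δ n 1 u * ‖ghatS φ u‖^2) :=
    integrable_pfun_mul_sq hδ hs hn (Or.inl rfl) (ghatS φ)
  have IT2 : Integrable (fun u : ℝ => pfun s δ n 1 u * ‖ghatS φ (u + 2*a*(n:ℝ))‖^2) := by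
    have base : Integrable (fun u : ℝ => pfun s δ n (-1) u * ‖ghatS φ u‖^2) :=
      integrable_pfun_mul_sq hδ hs hn (Or.inr rfl) (ghatS φ)
    have base2 : Integrable (fun u : ℝ => pfun s δ n 1 (u - 2*a*(n:ℝ)) * ‖ghatS φ u‖^2) := by
      rw [show (fun u : ℝ => pfun s δ n 1 (u - 2*a*(n:ℝ)) * ‖ghatS φ u‖^2)
          = (fun u : ℝ => pfun s δ n (-1) u * ‖ghatS φ u‖^2) from
        funext fun u => by rw [hshift u]]
      exact base
    refine (base2.comp_add_right (2*a*(n:ℝ))).congr (ae_of_all _ fun u => ?_)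
    simp [add_sub_cancel_right]
  have IT3 : Integrable (fun u : ℝ => pfun s δ n 1 u *
      (Complex.exp (((2*t : ℝ) : ℂ) * Complex.I) * ghatS φ u *
        (starRingEnd ℂ) (ghatS φ (u + 2*a*(n:ℝ)))).re) := by
    refine ((integrable_poly_mul hs (ghatS φ)).const_mul (4^s * C)).mono' ?_
      (ae_of_all _ fun u => ?_)
    · refine Continuous.aestronglyMeasurable ?_
      refine (pfun_continuous s δ n 1 hs).mul ?_
      refine Complex.continuous_re.comp ?_
      exact (continuous_const.mul (ghatS φ).continuous).mul
        (Complex.continuous_conj.comp ((ghatS φ).continuous.comp (continuous_id.add continuous_const)))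
    · have hz : ‖(Complex.exp (((2*t : ℝ) : ℂ) * Complex.I) * ghatS φ u *
          (starRingEnd ℂ) (ghatS φ (u + 2*a*(n:ℝ))))‖
          = ‖ghatS φ u‖ * ‖ghatS φ (u + 2*a*(n:ℝ))‖ := by
        rw [norm_mul, norm_mul]
        rw [Complex.norm_exp_ofReal_mul_I, Complex.norm_conj, one_mul]
      have hre : |(Complex.exp (((2*t : ℝ) : ℂ) * Complex.I) * ghatS φ u *
          (starRingEnd ℂ) (ghatS φ (u + 2*a*(n:ℝ)))).re|
          ≤ ‖ghatS φ u‖ * ‖ghatS φ (u + 2*a*(n:ℝ))‖ := by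
        rw [← hz]
        exact Complex.abs_re_le_norm _
      rw [Real.norm_eq_abs, abs_mul, _root_.abs_of_nonneg (pfun_nonneg s δ n 1 u)]
      calc pfun s δ n 1 u * |(Complex.exp (((2*t : ℝ) : ℂ) * Complex.I) * ghatS φ u *
            (starRingEnd ℂ) (ghatS φ (u + 2*a*(n:ℝ)))).re|
          ≤ (4^s * (1+u^2)^s) * (‖ghatS φ u‖ * C) := by
            refine mul_le_mul (pfun_bound hδ hs hn (Or.inl rfl) u) ?_ (abs_nonneg _) (by positivity)
            refine hre.trans ?_
            exact mul_le_mul_of_nonneg_left (hC _) (norm_nonneg _)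
        _ = (4^s * C) * ((1 + u^2)^s * ‖ghatS φ u‖) := by ring
  calc (∫ ξ : ℝ, (1 + ξ^2)^s * ‖fourierHat (fun x =>
        ((c * φ (x / a) * (Real.cos ((n:ℝ)*x + 2*t) - Real.cos ((n:ℝ)*x)) : ℝ) : ℂ)) ξ‖^2)
      = ∫ ξ : ℝ, (fun y : ℝ => G (a * y)) (ξ - (n:ℝ)) :=
        integral_congr_ae (ae_of_all _ step1)
    _ = ∫ y : ℝ, G (a * y) := integral_sub_right_eq_self (fun y : ℝ => G (a * y)) (n:ℝ)
    _ = |a⁻¹| • ∫ u : ℝ, G u := MeasureTheory.Measure.integral_comp_mul_left G a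
    _ = a⁻¹ * ∫ u : ℝ, G u := by
        rw [abs_of_pos (inv_pos.mpr ha), smul_eq_mul]
    _ = Real.sin t^2 * ((∫ u : ℝ, pfun s δ n 1 u * ‖ghatS φ u‖^2)
         + (∫ u : ℝ, pfun s δ n (-1) u * ‖ghatS φ u‖^2)
         - 2 * ∫ u : ℝ, pfun s δ n 1 u *
             (Complex.exp (((2*t : ℝ) : ℂ) * Complex.I) * ghatS φ u *
               (starRingEnd ℂ) (ghatS φ (u + 2*a*(n:ℝ)))).re) := by
        simp only [hGdef]
        rw [integral_const_mul, integral_const_mul, inv_mul_cancel_left₀ ha.ne']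
        congr 1
        have hY : ∀ u : ℝ, pfun s δ n 1 u *
            ‖Complex.exp (((t:ℝ):ℂ) * Complex.I) * ghatS φ u -
              Complex.exp ((((-t):ℝ):ℂ) * Complex.I) * ghatS φ (u + 2*a*(n:ℝ))‖^2
            = pfun s δ n 1 u * ‖ghatS φ u‖^2
              + pfun s δ n 1 u * ‖ghatS φ (u + 2*a*(n:ℝ))‖^2
              - 2 * (pfun s δ n 1 u *
                  (Complex.exp (((2*t : ℝ) : ℂ) * Complex.I) * ghatS φ u *
                    (starRingEnd ℂ) (ghatS φ (u + 2*a*(n:ℝ)))).re) := by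
          intro u
          rw [Qsplit]
          ring
        have IT12 : Integrable (fun u : ℝ => pfun s δ n 1 u * ‖ghatS φ u‖^2
            + pfun s δ n 1 u * ‖ghatS φ (u + 2*a*(n:ℝ))‖^2) := IT1.add IT2
        have IT3' : Integrable (fun u : ℝ => 2 * (pfun s δ n 1 u *
            (Complex.exp (((2*t : ℝ) : ℂ) * Complex.I) * ghatS φ u *
              (starRingEnd ℂ) (ghatS φ (u + 2*a*(n:ℝ)))).re)) := IT3.const_mul 2
        rw [integral_congr_ae (ae_of_all _ hY), integral_sub IT12 IT3',
          integral_add IT1 IT2, integral_const_mul]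
        have hT2 : (∫ u : ℝ, pfun s δ n 1 u * ‖ghatS φ (u + 2*a*(n:ℝ))‖^2)
            = ∫ u : ℝ, pfun s δ n (-1) u * ‖ghatS φ u‖^2 := by
          have e1 : ∀ x : ℝ, pfun s δ n 1 x * ‖ghatS φ (x + 2*a*(n:ℝ))‖^2
              = (fun u : ℝ => pfun s δ n 1 (u - 2*a*(n:ℝ)) * ‖ghatS φ u‖^2) (x + 2*a*(n:ℝ)) := by
            intro x
            simp only
            rw [add_sub_cancel_right]
          rw [integral_congr_ae (ae_of_all _ e1),
            integral_add_right_eq_self (fun u : ℝ => pfun s δ n 1 (u - 2*a*(n:ℝ)) * ‖ghatS φ u‖^2)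
              (2*a*(n:ℝ))]
          exact integral_congr_ae (ae_of_all _ fun u => by simp only [hshift])
        rw [hT2]


lemma plancherel_ghat (φ : SchwartzMap ℝ ℝ) :
    ∫ u : ℝ, ‖ghatS φ u‖^2 = ∫ x : ℝ, (φ x)^2 := by
  have hF : ⇑(𝓕 (cplx φ) : SchwartzMap ℝ ℂ) = 𝓕 ⇑(cplx φ) :=
    SchwartzMap.fourier_coe (cplx φ)
  have h1 : ∀ u : ℝ, ‖ghatS φ u‖^2 = (Real.sqrt (2*Real.pi))⁻¹^2 *
      ‖(𝓕 (cplx φ) : SchwartzMap ℝ ℂ) ((2*Real.pi)⁻¹ * u)‖^2 := by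
    intro u
    have h2 : ghatS φ u = ((Real.sqrt (2*Real.pi) : ℝ) : ℂ)⁻¹ *
        (𝓕 (cplx φ) : SchwartzMap ℝ ℂ) ((2*Real.pi)⁻¹ * u) := by
      simp only [ghatS, SchwartzMap.smul_apply, SchwartzMap.compCLMOfContinuousLinearEquiv_apply,
        Function.comp_apply, mulCLE_apply, smul_eq_mul]
    rw [h2, norm_mul, norm_inv]
    rw [show ‖((Real.sqrt (2*Real.pi) : ℝ) : ℂ)‖ = Real.sqrt (2*Real.pi) by
      rw [Complex.norm_real, Real.norm_eq_abs, _root_.abs_of_nonneg (Real.sqrt_nonneg _)]]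
    ring
  rw [integral_congr_ae (ae_of_all _ h1), integral_const_mul,
    MeasureTheory.Measure.integral_comp_mul_left
      (fun v => ‖(𝓕 (cplx φ) : SchwartzMap ℝ ℂ) v‖^2) ((2*Real.pi)⁻¹),
    inv_inv, _root_.abs_of_pos (by positivity : (0:ℝ) < 2*Real.pi), smul_eq_mul]
  have hpars : ∫ v : ℝ, ‖(𝓕 (cplx φ) : SchwartzMap ℝ ℂ) v‖^2
      = ∫ x : ℝ, ‖cplx φ x‖^2 := by
    calc ∫ v : ℝ, ‖(𝓕 (cplx φ) : SchwartzMap ℝ ℂ) v‖^2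
        = ∫ v : ℝ, ‖𝓕 (⇑(cplx φ)) v‖^2 := by rw [← hF]
      _ = ∫ x : ℝ, ‖cplx φ x‖^2 := parseval (cplx φ)
  rw [hpars]
  have h3 : ∀ x : ℝ, ‖cplx φ x‖^2 = (φ x)^2 := fun x => by
    simp only [cplx_apply, Complex.norm_real, Real.norm_eq_abs, _root_.sq_abs]
  rw [integral_congr_ae (ae_of_all _ h3), ← mul_assoc]
  have h4 : (Real.sqrt (2*Real.pi))⁻¹^2 * (2*Real.pi) = 1 := by
    rw [inv_pow, Real.sq_sqrt (by positivity : (0:ℝ) ≤ 2*Real.pi)]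
    field_simp
  rw [h4, one_mul]

end HS12

end HS12aux

/-- for a Schwartz function `φ`, `δ > 0`, `s ≥ 0` and `t ∈ ℝ`,
`lim_{n→∞} ‖n^{-δ/2-s} φ(x/n^δ)(cos(nx+2t) - cos(nx))‖_{H^s} = √2 |sin t| ‖φ‖_{L²}`. -/
theorem hs_norm_limit_cos_difference (φ : SchwartzMap ℝ ℝ) (δ : ℝ) (hδ : 0 < δ)
    (s : ℝ) (hs : 0 ≤ s) (t : ℝ) :
    Tendsto
      (fun n : ℕ =>
        hsNorm s (fun x =>
          (n : ℝ) ^ (-(δ/2) - s) * φ (x / (n : ℝ) ^ δ) *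
            (Real.cos ((n : ℝ) * x + 2 * t) - Real.cos ((n : ℝ) * x))))
      atTop (nhds (Real.sqrt 2 * |Real.sin t| * l2Norm (fun x => φ x))) := by

  have h1 := HS12.lim_main hδ hs (HS12.ghatS φ) (Or.inl rfl)
  have h2 := HS12.lim_main hδ hs (HS12.ghatS φ) (Or.inr rfl)
  have h3 := HS12.lim_cross hδ hs (HS12.ghatS φ) t
  have hA : Filter.Tendsto (fun n : ℕ => Real.sin t^2 *
      ((∫ u : ℝ, HS12.pfun s δ n 1 u * ‖HS12.ghatS φ u‖^2)
        + (∫ u : ℝ, HS12.pfun s δ n (-1) u * ‖HS12.ghatS φ u‖^2)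
        - 2 * ∫ u : ℝ, HS12.pfun s δ n 1 u *
            (Complex.exp (((2*t : ℝ) : ℂ) * Complex.I) * HS12.ghatS φ u *
              (starRingEnd ℂ) (HS12.ghatS φ (u + 2*(n:ℝ)^δ*(n:ℝ)))).re))
      Filter.atTop
      (nhds (Real.sin t^2 * ((∫ u : ℝ, ‖HS12.ghatS φ u‖^2)
        + (∫ u : ℝ, ‖HS12.ghatS φ u‖^2) - 2 * 0))) :=
    ((h1.add h2).sub (h3.const_mul (2:ℝ))).const_mul (Real.sin t^2)
  have hsqrt := (Real.continuous_sqrt.tendsto _).comp hA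
  have hval : Real.sqrt (Real.sin t^2 * ((∫ u : ℝ, ‖HS12.ghatS φ u‖^2)
      + (∫ u : ℝ, ‖HS12.ghatS φ u‖^2) - 2 * 0))
      = Real.sqrt 2 * |Real.sin t| * l2Norm (fun x => φ x) := by
    rw [HS12.plancherel_ghat φ]
    rw [show Real.sin t^2 * ((∫ x : ℝ, (φ x)^2) + (∫ x : ℝ, (φ x)^2) - 2*0)
        = 2 * (Real.sin t^2 * ∫ x : ℝ, (φ x)^2) by ring]
    rw [Real.sqrt_mul (by norm_num : (0:ℝ) ≤ 2), Real.sqrt_mul (sq_nonneg _),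
      Real.sqrt_sq_eq_abs]
    simp only [l2Norm]
    rw [← Real.sqrt_eq_rpow, mul_assoc]
  rw [← hval]
  refine hsqrt.congr' ?_
  filter_upwards [Filter.eventually_ge_atTop 1] with n hn
  show Real.sqrt _ = hsNorm s _
  simp only [hsNorm]
  rw [HS12.integral_V_eq φ hδ hs t hn, Real.sqrt_eq_rpow]
end

section
/- Let f : ℝ → ℝ be a Schwartz function and define g(x) = (1/2) ∫_ℝ e^{−|x−y|} f(y) dy. Then g is twice continuously differentiable and satisfies g(x) − g''(x) = f(x) for every x ∈ ℝ; that is, convolution with the kernel p(x) = (1/2)e^{−|x|} inverts the operator 1 − ∂_x². -/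
open MeasureTheory Set Real

private lemma my_integral_Ioi_sub_Ioi {h : ℝ → ℝ} {a b : ℝ}
    (ha : IntegrableOn h (Ioi a)) (hb : IntegrableOn h (Ioi b)) :
    ((∫ x in Ioi a, h x) - ∫ x in Ioi b, h x) = ∫ x in a..b, h x := by
  wlog hab : a ≤ b generalizing a b
  · rw [intervalIntegral.integral_symm, ← this hb ha (le_of_not_ge hab), neg_sub]
  rw [sub_eq_iff_eq_add, intervalIntegral.integral_of_le hab,
    ← setIntegral_union (Ioc_disjoint_Ioi le_rfl) measurableSet_Ioi
      (ha.mono_set Ioc_subset_Ioi_self) hb, Ioc_union_Ioi_eq_Ioi hab]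

/-- for a Schwartz function `f`, the function
`g(x) = (1/2) ∫ e^{-|x-y|} f(y) dy` is twice continuously differentiable and satisfies
`g - g'' = f`; i.e. convolution with `p(x) = (1/2) e^{-|x|}` inverts `1 - ∂_x²`. -/
theorem convolution_inverts_one_sub_dxx (f : SchwartzMap ℝ ℝ) (g : ℝ → ℝ)
    (hg : ∀ x : ℝ, g x = (1/2) * ∫ y : ℝ, Real.exp (-|x - y|) * f y) :
    ContDiff ℝ 2 g ∧ ∀ x : ℝ, g x - deriv (deriv g) x = f x := by
  have hfi : Integrable (fun y : ℝ => f y) := f.integrable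
  have hfc : Continuous (fun y : ℝ => f y) := f.continuous
  set A : ℝ → ℝ := fun x => ∫ y in Iic x, Real.exp y * f y with hAdef
  set B : ℝ → ℝ := fun x => ∫ y in Ioi x, Real.exp (-y) * f y with hBdef
  have hcA : Continuous fun y : ℝ => Real.exp y * f y := Real.continuous_exp.mul hfc
  have hcB : Continuous fun y : ℝ => Real.exp (-y) * f y :=
    (Real.continuous_exp.comp continuous_neg).mul hfc
  have hIA : ∀ x : ℝ, IntegrableOn (fun y => Real.exp y * f y) (Iic x) := by
    intro x
    refine Integrable.mono ((hfi.const_mul (Real.exp x)).restrict)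
      hcA.aestronglyMeasurable.restrict ?_
    refine (ae_restrict_iff' measurableSet_Iic).2 (Filter.Eventually.of_forall fun y hy => ?_)
    simp only [norm_mul, Real.norm_eq_abs, Real.abs_exp]
    exact mul_le_mul_of_nonneg_right (Real.exp_le_exp.2 hy) (abs_nonneg _)
  have hIB : ∀ x : ℝ, IntegrableOn (fun y => Real.exp (-y) * f y) (Ioi x) := by
    intro x
    refine Integrable.mono ((hfi.const_mul (Real.exp (-x))).restrict)
      hcB.aestronglyMeasurable.restrict ?_
    refine (ae_restrict_iff' measurableSet_Ioi).2 (Filter.Eventually.of_forall fun y hy => ?_)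
    simp only [norm_mul, Real.norm_eq_abs, Real.abs_exp]
    exact mul_le_mul_of_nonneg_right (Real.exp_le_exp.2 (by linarith [le_of_lt (show x < y from hy)]))
      (abs_nonneg _)
  -- rewrite g in terms of A and B
  have hgAB : ∀ x : ℝ, g x = (1/2) * (Real.exp (-x) * A x + Real.exp x * B x) := by
    intro x
    rw [hg x]
    congr 1
    have e1 : ∀ y ∈ Iic x, Real.exp (-|x - y|) * f y
        = Real.exp (-x) * (Real.exp y * f y) := by
      intro y hy
      rw [abs_of_nonneg (by simpa using hy), ← mul_assoc, ← Real.exp_add]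
      ring_nf
    have e2 : ∀ y ∈ Ioi x, Real.exp (-|x - y|) * f y
        = Real.exp x * (Real.exp (-y) * f y) := by
      intro y hy
      rw [abs_of_nonpos (by simp only [mem_Ioi] at hy; linarith), ← mul_assoc, ← Real.exp_add]
      ring_nf
    have i1 : IntegrableOn (fun y => Real.exp (-|x - y|) * f y) (Iic x) := by
      have h0 : IntegrableOn (fun y => Real.exp (-x) * (Real.exp y * f y)) (Iic x) :=
        (hIA x).const_mul (Real.exp (-x))
      exact h0.congr_fun (fun y hy => (e1 y hy).symm) measurableSet_Iic
    have i2 : IntegrableOn (fun y => Real.exp (-|x - y|) * f y) (Ioi x) := by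
      have h0 : IntegrableOn (fun y => Real.exp x * (Real.exp (-y) * f y)) (Ioi x) :=
        (hIB x).const_mul (Real.exp x)
      exact h0.congr_fun (fun y hy => (e2 y hy).symm) measurableSet_Ioi
    rw [← intervalIntegral.integral_Iic_add_Ioi i1 i2,
      setIntegral_congr_fun measurableSet_Iic e1, setIntegral_congr_fun measurableSet_Ioi e2,
      MeasureTheory.integral_const_mul, MeasureTheory.integral_const_mul]
  have hgfun : g = fun x => (1/2) * (Real.exp (-x) * A x + Real.exp x * B x) := funext hgAB
  -- derivatives of A and B
  have hA : ∀ x : ℝ, HasDerivAt A (Real.exp x * f x) x := by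
    intro x
    have h1 : A = fun u => A 0 + ∫ t in (0:ℝ)..u, Real.exp t * f t := by
      funext u
      rw [← intervalIntegral.integral_Iic_sub_Iic (hIA 0) (hIA u)]
      simp [hAdef]
    rw [h1]
    exact (intervalIntegral.integral_hasDerivAt_right (hcA.intervalIntegrable 0 x)
      (hcA.stronglyMeasurableAtFilter _ _) hcA.continuousAt).const_add (A 0)
  have hB : ∀ x : ℝ, HasDerivAt B (-(Real.exp (-x) * f x)) x := by
    intro x
    have h1 : B = fun u => B 0 - ∫ t in (0:ℝ)..u, Real.exp (-t) * f t := by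
      funext u
      rw [← my_integral_Ioi_sub_Ioi (hIB 0) (hIB u)]
      simp [hBdef]
    rw [h1]
    exact ((intervalIntegral.integral_hasDerivAt_right (hcB.intervalIntegrable 0 x)
      (hcB.stronglyMeasurableAtFilter _ _) hcB.continuousAt).const_sub (B 0))
  -- first derivative of g
  have hexp_neg : ∀ x : ℝ, HasDerivAt (fun u : ℝ => Real.exp (-u)) (-Real.exp (-x)) x := by
    intro x
    refine (hasDerivAt_neg x).exp.congr_deriv ?_
    ring
  have hg' : ∀ x : ℝ,
      HasDerivAt g ((1/2) * (Real.exp x * B x - Real.exp (-x) * A x)) x := by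
    intro x
    rw [hgfun]
    have h1 := (((hexp_neg x).mul (hA x)).add ((Real.hasDerivAt_exp x).mul (hB x))).const_mul
      (1/2 : ℝ)
    refine h1.congr_deriv ?_
    ring
  have hderiv : deriv g = fun x => (1/2) * (Real.exp x * B x - Real.exp (-x) * A x) :=
    funext fun x => (hg' x).deriv
  have key : ∀ x : ℝ, Real.exp (-x) * Real.exp x = 1 := by
    intro x; rw [← Real.exp_add]; simp
  -- second derivative
  have hg'' : ∀ x : ℝ, HasDerivAt (deriv g) (g x - f x) x := by
    intro x
    rw [hderiv]
    have h1 := (((Real.hasDerivAt_exp x).mul (hB x)).sub ((hexp_neg x).mul (hA x))).const_mul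
      (1/2 : ℝ)
    refine h1.congr_deriv ?_
    rw [hgAB x]
    linear_combination (-(f x)) * key x
  have hdd : deriv (deriv g) = fun x => g x - f x := funext fun x => (hg'' x).deriv
  constructor
  · rw [show (2 : WithTop ℕ∞) = 1 + 1 from rfl, contDiff_succ_iff_deriv]
    refine ⟨fun x => (hg' x).differentiableAt, by simp, ?_⟩
    rw [contDiff_one_iff_deriv]
    refine ⟨fun x => (hg'' x).differentiableAt, ?_⟩
    rw [hdd]
    exact ((Differentiable.continuous fun x => (hg' x).differentiableAt).sub hfc)
  · intro x
    rw [hdd]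
    ring
end
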